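/- arXiv:1709.03719 — 5 statements merged into one kernel-verified Lean document; each statement's English description precedes it below -/
import Mathlib

section
/- Let M > 0 and let ρ be a real random variable with P(ρ ∈ [0, M]) = 1 and P(ρ > 0) > 0, and let λ > 0 satisfy λ·E(ρ²) > 1. Then the equation E(λρ²/(1 + λρθ)) = 1 has exactly one solution θ in (0, +∞). -/
open MeasureTheory Filter Set

/-- Let `M > 0` and let `ρ` be a real random variable (with law `μ`) such that
`P(ρ ∈ [0, M]) = 1` and `P(ρ > 0) > 0`, and let `λ > 0` satisfy `λ·E(ρ²) > 1`.  Then the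
equation `E(λρ²/(1 + λρθ)) = 1` has exactly one solution `θ` in `(0, +∞)`. -/
theorem exists_unique_theta (M : ℝ) (hM : 0 < M) (μ : Measure ℝ) [IsProbabilityMeasure μ]
    (hμM : μ (Set.Icc (0 : ℝ) M) = 1) (hμpos : 0 < μ (Set.Ioi (0 : ℝ)))
    (lam : ℝ) (hlam : 0 < lam) (hsup : 1 < lam * ∫ x, x ^ 2 ∂μ) :
    ∃! θ : ℝ, 0 < θ ∧ ∫ x, lam * x ^ 2 / (1 + lam * x * θ) ∂μ = 1 := by
  set f : ℝ → ℝ → ℝ := fun θ x => lam * x ^ 2 / (1 + lam * x * θ) with hf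
  set F : ℝ → ℝ := fun θ => ∫ x, f θ x ∂μ with hF
  -- a.e. membership in [0, M]
  have haeIcc : ∀ᵐ x ∂μ, x ∈ Set.Icc (0 : ℝ) M := by
    rw [MeasureTheory.ae_iff]
    have : {x : ℝ | ¬ x ∈ Set.Icc (0:ℝ) M} = (Set.Icc (0:ℝ) M)ᶜ := rfl
    rw [this, measure_compl measurableSet_Icc (measure_ne_top μ _), hμM, measure_univ]
    simp
  -- measurability of integrands
  have hmeas : ∀ θ : ℝ, AEStronglyMeasurable (f θ) μ := by
    intro θ
    apply Measurable.aestronglyMeasurable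
    fun_prop
  -- denominator ≥ 1 for θ ≥ 0, x ≥ 0
  have hden : ∀ θ x : ℝ, 0 ≤ θ → 0 ≤ x → (1:ℝ) ≤ 1 + lam * x * θ := by
    intro θ x hθ hx
    nlinarith [mul_nonneg (mul_nonneg hlam.le hx) hθ]
  -- nonnegativity and bound
  have hbound : ∀ θ x : ℝ, 0 ≤ θ → x ∈ Set.Icc (0:ℝ) M → 0 ≤ f θ x ∧ f θ x ≤ lam * M ^ 2 := by
    intro θ x hθ hx
    have h1 := hden θ x hθ hx.1
    constructor
    · apply div_nonneg (by positivity) (by linarith)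
    · calc f θ x ≤ lam * x ^ 2 / 1 :=
            div_le_div_of_nonneg_left (by positivity) one_pos h1
        _ = lam * x ^ 2 := div_one _
        _ ≤ lam * M ^ 2 := by
            nlinarith [mul_nonneg (sub_nonneg.2 hx.2) (by linarith [hx.1] : (0:ℝ) ≤ M + x), hlam.le,
              mul_le_mul_of_nonneg_left (by nlinarith [hx.1, hx.2] : x ^ 2 ≤ M ^ 2) hlam.le]
  -- integrability
  have hint : ∀ θ : ℝ, 0 ≤ θ → Integrable (f θ) μ := by
    intro θ hθ
    refine ⟨hmeas θ, MeasureTheory.HasFiniteIntegral.of_bounded (C := lam * M ^ 2) ?_⟩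
    filter_upwards [haeIcc] with x hx
    have := hbound θ x hθ hx
    rw [Real.norm_eq_abs, abs_of_nonneg this.1]
    exact this.2
  -- strict monotonicity: F θ₂ < F θ₁ for 0 ≤ θ₁ < θ₂
  have hstrict : ∀ θ₁ θ₂ : ℝ, 0 ≤ θ₁ → θ₁ < θ₂ → F θ₂ < F θ₁ := by
    intro θ₁ θ₂ hθ₁ h12
    have hθ₂ : 0 ≤ θ₂ := le_of_lt (lt_of_le_of_lt hθ₁ h12)
    have key : 0 < ∫ x, (f θ₁ x - f θ₂ x) ∂μ := by
      have hgpos : ∀ x : ℝ, 0 < x → 0 < f θ₁ x - f θ₂ x := by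
        intro x hx
        have ha : (0:ℝ) < lam * x ^ 2 := by positivity
        have hb : (0:ℝ) < 1 + lam * x * θ₁ := by nlinarith [mul_pos (mul_pos hlam hx) (lt_of_le_of_lt hθ₁ h12)]
        have hc : 1 + lam * x * θ₁ < 1 + lam * x * θ₂ := by nlinarith [mul_pos hlam hx]
        have := div_lt_div_of_pos_left ha hb hc
        simp only [hf]
        linarith
      rw [MeasureTheory.integral_pos_iff_support_of_nonneg_ae]
      · refine lt_of_lt_of_le hμpos (measure_mono ?_)
        intro x hx
        exact ne_of_gt (hgpos x hx)
      · filter_upwards [haeIcc] with x hx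
        rcases eq_or_lt_of_le hx.1 with h | h
        · simp only [Pi.zero_apply, hf, ← h]
          simp
        · exact le_of_lt (hgpos x h)
      · exact (hint θ₁ hθ₁).sub (hint θ₂ hθ₂)
    rw [MeasureTheory.integral_sub (hint θ₁ hθ₁) (hint θ₂ hθ₂)] at key
    simp only [hF]
    linarith
  -- F 0 > 1
  have hF0 : 1 < F 0 := by
    have : F 0 = lam * ∫ x, x ^ 2 ∂μ := by
      simp only [hF, hf]
      rw [← MeasureTheory.integral_const_mul]
      congr 1 with x
      simp
    rw [this]; exact hsup
  -- F (2M) ≤ 1/2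
  have hF2M : F (2 * M) < 1 := by
    have hle : F (2 * M) ≤ 1 / 2 := by
      have : (1:ℝ)/2 = ∫ _x, (1:ℝ)/2 ∂μ := by
        rw [MeasureTheory.integral_const]; simp
      rw [this]
      apply MeasureTheory.integral_mono_ae (hint _ (by positivity)) (integrable_const _)
      filter_upwards [haeIcc] with x hx
      rcases eq_or_lt_of_le hx.1 with h | h
      · simp only [hf, ← h]; norm_num
      · have hd : (0:ℝ) < 2 * lam * x * M := by positivity
        have h1 : lam * x * (2 * M) ≤ 1 + lam * x * (2 * M) := by linarith
        calc f (2*M) x ≤ lam * x ^ 2 / (lam * x * (2 * M)) := by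
              apply div_le_div_of_nonneg_left (by positivity) (by nlinarith) (by nlinarith)
          _ = x / (2 * M) := by field_simp
          _ ≤ 1 / 2 := by rw [div_le_div_iff₀ (by linarith) (by norm_num)]; nlinarith [hx.2]
    linarith
  -- continuity of F on [0, 2M]
  have hcont : ContinuousOn F (Set.Icc 0 (2 * M)) := by
    intro θ₀ hθ₀
    apply ContinuousAt.continuousWithinAt
    set δ : ℝ := 1 / (2 * lam * M) with hδ
    have hδpos : 0 < δ := by positivity
    apply MeasureTheory.continuousAt_of_dominated (bound := fun _ => 2 * lam * M ^ 2)
    · exact Filter.Eventually.of_forall hmeas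
    · have hnhds : Set.Ioo (θ₀ - δ) (θ₀ + δ) ∈ nhds θ₀ :=
        Ioo_mem_nhds (by linarith) (by linarith)
      filter_upwards [hnhds] with θ hθ
      filter_upwards [haeIcc] with x hx
      have hd : (1:ℝ)/2 ≤ 1 + lam * x * θ := by
        have h1 : lam * x * θ ≥ lam * x * (θ₀ - δ) := by
          apply mul_le_mul_of_nonneg_left (le_of_lt hθ.1) (mul_nonneg hlam.le hx.1)
        have h2 : lam * x * (θ₀ - δ) ≥ - (lam * x * δ) := by
          nlinarith [mul_nonneg (mul_nonneg hlam.le hx.1) hθ₀.1]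
        have h3 : lam * x * δ ≤ lam * M * δ := by
          apply mul_le_mul_of_nonneg_right _ hδpos.le
          exact mul_le_mul_of_nonneg_left hx.2 hlam.le
        have h4 : lam * M * δ = 1/2 := by
          rw [hδ]; field_simp
        linarith
      have hnum : 0 ≤ lam * x ^ 2 := by positivity
      rw [Real.norm_eq_abs, abs_of_nonneg (div_nonneg hnum (by linarith))]
      calc f θ x ≤ lam * x ^ 2 / (1/2) :=
            div_le_div_of_nonneg_left hnum (by norm_num) hd
        _ = 2 * (lam * x ^ 2) := by ring
        _ ≤ 2 * lam * M ^ 2 := by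
          nlinarith [mul_le_mul_of_nonneg_left (by nlinarith [hx.1, hx.2] : x ^ 2 ≤ M ^ 2) hlam.le]
    · exact integrable_const _
    · filter_upwards [haeIcc] with x hx
      apply ContinuousAt.div continuousAt_const
      · fun_prop
      · have := hden θ₀ x hθ₀.1 hx.1
        intro h; rw [h] at this; linarith
  -- existence via IVT
  have hIVT : (1:ℝ) ∈ F '' Set.Ioo 0 (2 * M) := by
    apply intermediate_value_Ioo' (by linarith) hcont
    exact ⟨hF2M, hF0⟩
  obtain ⟨θ, hθmem, hθeq⟩ := hIVT
  refine ⟨θ, ⟨hθmem.1, hθeq⟩, ?_⟩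
  rintro θ' ⟨hθ'pos, hθ'eq⟩
  have hFθ' : F θ' = 1 := hθ'eq
  by_contra hne
  rcases lt_or_gt_of_ne hne with h | h
  · have := hstrict θ' θ hθ'pos.le h
    rw [hθeq, hFθ'] at this; exact lt_irrefl 1 this
  · have := hstrict θ θ' hθmem.1.le h
    rw [hθeq, hFθ'] at this; exact lt_irrefl 1 this
end

section
/- Fix M > 0 and a real random variable ρ with P(ρ ∈ [0, M]) = 1 and P(ρ > 0) > 0. For each λ > 1/E(ρ²) let θ(λ) denote the unique positive solution of E(λρ²/(1 + λρθ(λ))) = 1. Then λ ↦ θ(λ) is continuous on (1/E(ρ²), +∞): for every λ > 1/E(ρ²) and every sequence λ_n ∈ (1/E(ρ²), +∞) with λ_n → λ one has θ(λ_n) → θ(λ). -/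
open MeasureTheory Filter Set


lemma denom_pos {l x t : ℝ} (hl : 0 < l) (hx : 0 ≤ x) (ht : 0 ≤ t) :
    (0:ℝ) < 1 + l * x * t := by
  have := mul_nonneg (mul_nonneg hl.le hx) ht; linarith

lemma g_nonneg {l x t : ℝ} (hl : 0 < l) (hx : 0 ≤ x) (ht : 0 ≤ t) :
    0 ≤ l * x ^ 2 / (1 + l * x * t) :=
  div_nonneg (by positivity) (denom_pos hl hx ht).le

lemma g_le {l x t M : ℝ} (hl : 0 < l) (hx : x ∈ Set.Icc (0:ℝ) M) (ht : 0 ≤ t) :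
    l * x ^ 2 / (1 + l * x * t) ≤ l * M ^ 2 := by
  obtain ⟨hx0, hxM⟩ := hx
  have h1 : (1:ℝ) ≤ 1 + l * x * t := by
    have := mul_nonneg (mul_nonneg hl.le hx0) ht; linarith
  have h2 : l * x ^ 2 / (1 + l * x * t) ≤ l * x ^ 2 := div_le_self (by positivity) h1
  have h3 : x ^ 2 ≤ M ^ 2 := pow_le_pow_left₀ hx0 hxM 2
  nlinarith

lemma g_meas (l t : ℝ) : Measurable (fun x : ℝ => l * x ^ 2 / (1 + l * x * t)) := by
  fun_prop

lemma g_integrable {μ : Measure ℝ} [IsProbabilityMeasure μ] {M : ℝ}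
    (hae : ∀ᵐ x ∂μ, x ∈ Set.Icc (0:ℝ) M) {l t : ℝ} (hl : 0 < l) (ht : 0 ≤ t) :
    Integrable (fun x => l * x ^ 2 / (1 + l * x * t)) μ := by
  refine ⟨(g_meas l t).aestronglyMeasurable, HasFiniteIntegral.of_bounded (C := l * M ^ 2) ?_⟩
  filter_upwards [hae] with x hx
  rw [Real.norm_eq_abs, abs_of_nonneg (g_nonneg hl hx.1 ht)]
  exact g_le hl hx ht

lemma g_strict_anti {μ : Measure ℝ} [IsProbabilityMeasure μ] {M : ℝ}
    (hae : ∀ᵐ x ∂μ, x ∈ Set.Icc (0:ℝ) M) (hμpos : 0 < μ (Set.Ioi (0:ℝ)))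
    {l t1 t2 : ℝ} (hl : 0 < l) (ht1 : 0 ≤ t1) (h12 : t1 < t2) :
    ∫ x, l * x ^ 2 / (1 + l * x * t2) ∂μ < ∫ x, l * x ^ 2 / (1 + l * x * t1) ∂μ := by
  have ht2 : 0 ≤ t2 := le_of_lt (ht1.trans_lt h12)
  have hi1 := g_integrable hae hl ht1
  have hi2 := g_integrable hae hl ht2
  have key : 0 < ∫ x, (l * x ^ 2 / (1 + l * x * t1) - l * x ^ 2 / (1 + l * x * t2)) ∂μ := by
    rw [integral_pos_iff_support_of_nonneg_ae]
    · refine lt_of_lt_of_le hμpos (measure_mono ?_)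
      intro x hx
      simp only [Function.mem_support]
      have hx0 : (0:ℝ) < x := hx
      have hd1 := denom_pos hl hx0.le ht1
      have hd2 := denom_pos hl hx0.le ht2
      have : l * x ^ 2 / (1 + l * x * t2) < l * x ^ 2 / (1 + l * x * t1) := by
        apply div_lt_div_of_pos_left (by positivity) hd1
        nlinarith [mul_pos (mul_pos hl hx0) (sub_pos.mpr h12)]
      intro hcon
      have : l * x ^ 2 / (1 + l * x * t1) = l * x ^ 2 / (1 + l * x * t2) := by
        linarith [sub_eq_zero.mp hcon]
      linarith
    · filter_upwards [hae] with x hx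
      have hd1 := denom_pos hl hx.1 ht1
      have hd2 := denom_pos hl hx.1 ht2
      have : l * x ^ 2 / (1 + l * x * t2) ≤ l * x ^ 2 / (1 + l * x * t1) := by
        apply div_le_div_of_nonneg_left (by positivity) hd1
        nlinarith [mul_nonneg (mul_nonneg hl.le hx.1) (sub_pos.mpr h12).le]
      simp [this]
    · exact hi1.sub hi2
  rw [integral_sub hi1 hi2] at key
  linarith

lemma theta_le_M {μ : Measure ℝ} [IsProbabilityMeasure μ] {M : ℝ} (hM : 0 < M)
    (hae : ∀ᵐ x ∂μ, x ∈ Set.Icc (0:ℝ) M)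
    {l t : ℝ} (hl : 0 < l) (ht : 0 < t)
    (heq : ∫ x, l * x ^ 2 / (1 + l * x * t) ∂μ = 1) : t ≤ M := by
  have hle : ∫ x, l * x ^ 2 / (1 + l * x * t) ∂μ ≤ ∫ _x, M / t ∂μ := by
    apply integral_mono_ae (g_integrable hae hl ht.le) (integrable_const _)
    filter_upwards [hae] with x hx
    rcases eq_or_lt_of_le hx.1 with h0 | h0
    · rw [← h0]; simp; positivity
    · have hd := denom_pos hl hx.1 ht.le
      rw [div_le_div_iff₀ hd ht]
      have : l * x * t ≤ 1 + l * x * t := by linarith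
      calc l * x ^ 2 * t = x * (l * x * t) := by ring
        _ ≤ x * (1 + l * x * t) := by
            apply mul_le_mul_of_nonneg_left _ hx.1
            linarith
        _ ≤ M * (1 + l * x * t) := by
            apply mul_le_mul_of_nonneg_right hx.2 hd.le
  rw [heq, integral_const] at hle
  simp at hle
  rw [le_div_iff₀ ht] at hle
  linarith

lemma g_tendsto {μ : Measure ℝ} [IsProbabilityMeasure μ] {M : ℝ}
    (hae : ∀ᵐ x ∂μ, x ∈ Set.Icc (0:ℝ) M)
    {ln tn : ℕ → ℝ} {l t : ℝ} (hl : 0 < l) (ht : 0 ≤ t)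
    (hlnp : ∀ n, 0 < ln n) (htnp : ∀ n, 0 ≤ tn n)
    (hlnl : Tendsto ln atTop (nhds l)) (htnt : Tendsto tn atTop (nhds t)) :
    Tendsto (fun n => ∫ x, ln n * x ^ 2 / (1 + ln n * x * tn n) ∂μ) atTop
      (nhds (∫ x, l * x ^ 2 / (1 + l * x * t) ∂μ)) := by
  apply tendsto_integral_filter_of_dominated_convergence (fun _ => (l + 1) * M ^ 2)
  · exact Eventually.of_forall fun n => (g_meas _ _).aestronglyMeasurable
  · have hev : ∀ᶠ n in atTop, ln n ≤ l + 1 :=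
      hlnl.eventually_le_const (lt_add_one l)
    filter_upwards [hev] with n hn
    filter_upwards [hae] with x hx
    rw [Real.norm_eq_abs, abs_of_nonneg (g_nonneg (hlnp n) hx.1 (htnp n))]
    refine (g_le (hlnp n) hx (htnp n)).trans ?_
    have : (0:ℝ) ≤ M ^ 2 := sq_nonneg M
    nlinarith
  · exact integrable_const _
  · filter_upwards [hae] with x hx
    have hden : Tendsto (fun n => 1 + ln n * x * tn n) atTop (nhds (1 + l * x * t)) :=
      tendsto_const_nhds.add ((hlnl.mul_const x).mul htnt)
    have hnum : Tendsto (fun n => ln n * x ^ 2) atTop (nhds (l * x ^ 2)) :=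
      hlnl.mul_const _
    exact hnum.div hden (denom_pos hl hx.1 ht).ne'

/-- Fix `M > 0` and a real random variable `ρ` (with law `μ`) such that
`P(ρ ∈ [0, M]) = 1` and `P(ρ > 0) > 0`.  For each `λ > 1/E(ρ²)` let `θ(λ)` denote the unique
positive solution of `E(λρ²/(1 + λρθ(λ))) = 1`.  Then `λ ↦ θ(λ)` is continuous on
`(1/E(ρ²), +∞)`: for every `λ > 1/E(ρ²)` and every sequence `λ_n ∈ (1/E(ρ²), +∞)` with
`λ_n → λ` one has `θ(λ_n) → θ(λ)`. -/
theorem theta_continuous (M : ℝ) (hM : 0 < M) (μ : Measure ℝ) [IsProbabilityMeasure μ]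
    (hμM : μ (Set.Icc (0 : ℝ) M) = 1) (hμpos : 0 < μ (Set.Ioi (0 : ℝ)))
    (θ : ℝ → ℝ)
    (hθ : ∀ l : ℝ, 1 / (∫ x, x ^ 2 ∂μ) < l →
      0 < θ l ∧ ∫ x, l * x ^ 2 / (1 + l * x * θ l) ∂μ = 1)
    (l : ℝ) (hl : 1 / (∫ x, x ^ 2 ∂μ) < l)
    (lseq : ℕ → ℝ) (hlseq : ∀ n, 1 / (∫ x, x ^ 2 ∂μ) < lseq n)
    (hlim : Tendsto lseq atTop (nhds l)) :
    Tendsto (fun n => θ (lseq n)) atTop (nhds (θ l)) := by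
  have hae : ∀ᵐ x ∂μ, x ∈ Set.Icc (0:ℝ) M := by
    rw [ae_iff]
    have h : {x : ℝ | ¬ x ∈ Set.Icc (0:ℝ) M} = (Set.Icc (0:ℝ) M)ᶜ := rfl
    rw [h, prob_compl_eq_zero_iff measurableSet_Icc]
    exact hμM
  -- E(ρ²) > 0
  have hint2 : Integrable (fun x : ℝ => x ^ 2) μ := by
    refine ⟨(measurable_id.pow_const 2).aestronglyMeasurable,
      HasFiniteIntegral.of_bounded (C := M ^ 2) ?_⟩
    filter_upwards [hae] with x hx
    rw [Real.norm_eq_abs, abs_of_nonneg (sq_nonneg x)]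
    exact pow_le_pow_left₀ hx.1 hx.2 2
  have hEpos : 0 < ∫ x, x ^ 2 ∂μ := by
    rw [integral_pos_iff_support_of_nonneg (fun x => sq_nonneg x) hint2]
    refine lt_of_lt_of_le hμpos (measure_mono ?_)
    intro x hx
    have : (0:ℝ) < x := hx
    simp only [Function.mem_support]
    positivity
  have hlpos : 0 < l := lt_trans (div_pos one_pos hEpos) hl
  have hlnpos : ∀ n, 0 < lseq n := fun n => lt_trans (div_pos one_pos hEpos) (hlseq n)
  obtain ⟨hθl_pos, hθl_eq⟩ := hθ l hl
  apply tendsto_of_subseq_tendsto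
  intro ns hns
  have hmem : ∀ n, θ (lseq (ns n)) ∈ Set.Icc (0:ℝ) M := by
    intro n
    obtain ⟨hp, he⟩ := hθ _ (hlseq (ns n))
    exact ⟨hp.le, theta_le_M hM hae (hlnpos _) hp he⟩
  obtain ⟨t, htmem, φ, hφ, hconv⟩ :=
    tendsto_subseq_of_bounded (Metric.isBounded_Icc 0 M) hmem
  rw [closure_Icc] at htmem
  refine ⟨φ, ?_⟩
  have hns' : Tendsto (fun n => lseq (ns (φ n))) atTop (nhds l) :=
    hlim.comp (hns.comp hφ.tendsto_atTop)
  -- limit of the integral equation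
  have hF : Tendsto (fun n => ∫ x, lseq (ns (φ n)) * x ^ 2 /
        (1 + lseq (ns (φ n)) * x * θ (lseq (ns (φ n)))) ∂μ) atTop
      (nhds (∫ x, l * x ^ 2 / (1 + l * x * t) ∂μ)) :=
    g_tendsto hae hlpos htmem.1 (fun n => hlnpos _) (fun n => (hθ _ (hlseq _)).1.le)
      hns' hconv
  have hFt : ∫ x, l * x ^ 2 / (1 + l * x * t) ∂μ = 1 := by
    have h1 : (fun n => ∫ x, lseq (ns (φ n)) * x ^ 2 /
        (1 + lseq (ns (φ n)) * x * θ (lseq (ns (φ n)))) ∂μ) = fun _ => (1:ℝ) :=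
      funext fun n => (hθ _ (hlseq _)).2
    rw [h1] at hF
    exact (tendsto_nhds_unique tendsto_const_nhds hF).symm
  -- t = θ l
  have ht_eq : t = θ l := by
    rcases lt_trichotomy t (θ l) with h | h | h
    · exfalso
      have := g_strict_anti hae hμpos hlpos htmem.1 h
      rw [hFt, hθl_eq] at this
      exact lt_irrefl 1 this
    · exact h
    · exfalso
      have := g_strict_anti hae hμpos hlpos hθl_pos.le h
      rw [hFt, hθl_eq] at this
      exact lt_irrefl 1 this
  rw [ht_eq] at hconv
  exact hconv
end

section
/- Fix M > 0, a real random variable ρ with P(ρ ∈ [0, M]) = 1 and P(ρ > 0) > 0, and λ > 0 with λ·E(ρ²) > 1; let θ be the unique positive solution of E(λρ²/(1 + λρθ)) = 1. For m ≥ 1 set ρ_m = ρ·1_{{ρ ≥ 1/m}}. Then for all sufficiently large m one has λ·E(ρ_m²) > 1, and, letting θ_m denote the unique positive solution of E(λρ_m²/(1 + λρ_m θ_m)) = 1, one has lim_{m→∞} θ_m = θ. -/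
open MeasureTheory Filter Set

section Aux

variable {μ : Measure ℝ} [IsProbabilityMeasure μ] {M lam : ℝ}

lemma aux_meas {ψ : ℝ → ℝ} (hψ : Measurable ψ) (lam t : ℝ) :
    Measurable (fun x => lam * ψ x ^ 2 / (1 + lam * ψ x * t)) :=
  (((hψ.pow_const 2).const_mul lam).div (((hψ.const_mul lam).mul_const t).const_add 1))

lemma aux_integrable (hlam : 0 < lam) (hM : 0 < M) {t : ℝ} (ht : 0 ≤ t)
    {ψ : ℝ → ℝ} (hψ : Measurable ψ) (hb : ∀ᵐ x ∂μ, ψ x ∈ Icc 0 M) :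
    Integrable (fun x => lam * ψ x ^ 2 / (1 + lam * ψ x * t)) μ := by
  apply Integrable.mono' (integrable_const (lam * M ^ 2))
    (aux_meas hψ lam t).aestronglyMeasurable
  filter_upwards [hb] with x hx
  have h0 : 0 ≤ ψ x := hx.1
  have hm : 0 ≤ lam * ψ x * t := mul_nonneg (mul_nonneg hlam.le h0) ht
  have h1 : (1:ℝ) ≤ 1 + lam * ψ x * t := by linarith
  have hsq : ψ x ^ 2 ≤ M ^ 2 := by nlinarith [hx.2]
  rw [Real.norm_eq_abs, abs_of_nonneg (by positivity)]
  calc lam * ψ x ^ 2 / (1 + lam * ψ x * t) ≤ lam * ψ x ^ 2 / 1 := by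
        gcongr <;> first | positivity | linarith
  _ ≤ lam * M ^ 2 := by rw [div_one]; nlinarith [hsq]

lemma aux_mono (hlam : 0 < lam) (hM : 0 < M) {t1 t2 : ℝ} (ht1 : 0 ≤ t1) (h12 : t1 ≤ t2)
    {ψ : ℝ → ℝ} (hψ : Measurable ψ) (hb : ∀ᵐ x ∂μ, ψ x ∈ Icc 0 M) :
    ∫ x, lam * ψ x ^ 2 / (1 + lam * ψ x * t2) ∂μ
      ≤ ∫ x, lam * ψ x ^ 2 / (1 + lam * ψ x * t1) ∂μ := by
  apply integral_mono_ae (aux_integrable hlam hM (ht1.trans h12) hψ hb)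
    (aux_integrable hlam hM ht1 hψ hb)
  filter_upwards [hb] with x hx
  have h0 : 0 ≤ ψ x := hx.1
  have hm1 : 0 ≤ lam * ψ x * t1 := mul_nonneg (mul_nonneg hlam.le h0) ht1
  have hm2 : 0 ≤ lam * ψ x * (t2 - t1) :=
    mul_nonneg (mul_nonneg hlam.le h0) (by linarith)
  have hd : (0:ℝ) < 1 + lam * ψ x * t1 := by linarith
  have hd2 : 1 + lam * ψ x * t1 ≤ 1 + lam * ψ x * t2 := by nlinarith [hm2]
  gcongr <;> first | positivity | linarith

lemma aux_ae (hM : 0 < M) (hμM : μ (Set.Icc (0 : ℝ) M) = 1) :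
    ∀ᵐ x ∂μ, x ∈ Icc (0:ℝ) M := by
  have hc : μ (Icc (0:ℝ) M)ᶜ = 0 := by
    rw [measure_compl measurableSet_Icc (measure_ne_top μ _), hμM, measure_univ, tsub_self]
  rw [ae_iff]
  exact hc

lemma aux_strict (hlam : 0 < lam) (hM : 0 < M) (hμM : μ (Set.Icc (0 : ℝ) M) = 1)
    (hμpos : 0 < μ (Set.Ioi (0 : ℝ))) {t1 t2 : ℝ} (ht1 : 0 ≤ t1) (h12 : t1 < t2) :
    ∫ x, lam * x ^ 2 / (1 + lam * x * t2) ∂μ < ∫ x, lam * x ^ 2 / (1 + lam * x * t1) ∂μ := by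
  have hae := aux_ae hM hμM
  have hb : ∀ᵐ x ∂μ, (id x : ℝ) ∈ Icc (0:ℝ) M := hae
  have hi1 : Integrable (fun x => lam * x ^ 2 / (1 + lam * x * t1)) μ :=
    aux_integrable hlam hM ht1 measurable_id hb
  have hi2 : Integrable (fun x => lam * x ^ 2 / (1 + lam * x * t2)) μ :=
    aux_integrable hlam hM (ht1.trans h12.le) measurable_id hb
  have key : 0 < ∫ x, (lam * x ^ 2 / (1 + lam * x * t1) - lam * x ^ 2 / (1 + lam * x * t2)) ∂μ := by
    rw [integral_pos_iff_support_of_nonneg_ae]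
    · refine lt_of_lt_of_le hμpos (measure_mono ?_)
      intro x hx
      have hx' : (0:ℝ) < x := hx
      have hm1 : 0 ≤ lam * x * t1 := mul_nonneg (mul_nonneg hlam.le hx'.le) ht1
      have hm2 : 0 < lam * x * (t2 - t1) :=
        mul_pos (mul_pos hlam hx') (by linarith)
      have hd1 : (0:ℝ) < 1 + lam * x * t1 := by linarith
      have hd2 : 1 + lam * x * t1 < 1 + lam * x * t2 := by nlinarith [hm2]
      have : lam * x ^ 2 / (1 + lam * x * t2) < lam * x ^ 2 / (1 + lam * x * t1) := by
        gcongr <;> first | positivity | linarith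
      simp only [Function.mem_support]
      exact ne_of_gt (sub_pos.2 this)
    · filter_upwards [hae] with x hx
      have h0 : 0 ≤ x := hx.1
      have hm1 : 0 ≤ lam * x * t1 := mul_nonneg (mul_nonneg hlam.le h0) ht1
      have hm2 : 0 ≤ lam * x * (t2 - t1) :=
        mul_nonneg (mul_nonneg hlam.le h0) (by linarith)
      have hd1 : (0:ℝ) < 1 + lam * x * t1 := by linarith
      have hd2 : 1 + lam * x * t1 ≤ 1 + lam * x * t2 := by nlinarith [hm2]
      have : lam * x ^ 2 / (1 + lam * x * t2) ≤ lam * x ^ 2 / (1 + lam * x * t1) := by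
        gcongr <;> first | positivity | linarith
      simpa using sub_nonneg.2 this
    · exact hi1.sub hi2
  rw [integral_sub hi1 hi2] at key
  linarith

lemma phi_meas (m : ℕ) : Measurable (fun x : ℝ => if 1 / (m : ℝ) ≤ x then x else 0) :=
  Measurable.ite measurableSet_Ici measurable_id measurable_const

lemma phi_bound (hM : 0 < M) (hμM : μ (Set.Icc (0 : ℝ) M) = 1) (m : ℕ) :
    ∀ᵐ x ∂μ, (if 1 / (m : ℝ) ≤ x then x else 0) ∈ Icc (0:ℝ) M := by
  filter_upwards [aux_ae hM hμM] with x hx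
  split_ifs
  · exact hx
  · exact ⟨le_refl 0, hM.le⟩

lemma phi_ev (x : ℝ) (hx0 : 0 ≤ x) :
    ∀ᶠ m : ℕ in atTop, (if 1 / (m : ℝ) ≤ x then x else 0) = x := by
  rcases eq_or_lt_of_le hx0 with h0 | h0
  · refine Eventually.of_forall fun m => ?_
    rw [← h0]
    simp
  · filter_upwards [tendsto_one_div_atTop_nhds_zero_nat.eventually (eventually_le_nhds h0)]
      with m hm
    rw [if_pos hm]

lemma tendsto_sq (hM : 0 < M) (hμM : μ (Set.Icc (0 : ℝ) M) = 1) :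
    Tendsto (fun m : ℕ => ∫ x, (if 1 / (m : ℝ) ≤ x then x else 0) ^ 2 ∂μ) atTop
      (nhds (∫ x, x ^ 2 ∂μ)) := by
  apply tendsto_integral_of_dominated_convergence (fun _ => M ^ 2)
  · exact fun m => ((phi_meas m).pow_const 2).aestronglyMeasurable
  · exact integrable_const _
  · intro m
    filter_upwards [phi_bound hM hμM m] with x hx
    rw [Real.norm_eq_abs, abs_of_nonneg (by positivity)]
    nlinarith [hx.1, hx.2]
  · filter_upwards [aux_ae hM hμM] with x hx
    refine Tendsto.congr' ?_ tendsto_const_nhds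
    filter_upwards [phi_ev x hx.1] with m hm
    rw [hm]

lemma tendsto_G (hlam : 0 < lam) (hM : 0 < M) (hμM : μ (Set.Icc (0 : ℝ) M) = 1)
    {t : ℝ} (ht : 0 ≤ t) :
    Tendsto (fun m : ℕ => ∫ x, lam * (if 1 / (m : ℝ) ≤ x then x else 0) ^ 2 /
        (1 + lam * (if 1 / (m : ℝ) ≤ x then x else 0) * t) ∂μ) atTop
      (nhds (∫ x, lam * x ^ 2 / (1 + lam * x * t) ∂μ)) := by
  apply tendsto_integral_of_dominated_convergence (fun _ => lam * M ^ 2)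
  · exact fun m => (aux_meas (phi_meas m) lam t).aestronglyMeasurable
  · exact integrable_const _
  · intro m
    filter_upwards [phi_bound hM hμM m] with x hx
    set y := if 1 / (m : ℝ) ≤ x then x else 0
    have h0 : 0 ≤ y := hx.1
    have hm : 0 ≤ lam * y * t := mul_nonneg (mul_nonneg hlam.le h0) ht
    have h1 : (1:ℝ) ≤ 1 + lam * y * t := by linarith
    have hsq : y ^ 2 ≤ M ^ 2 := by nlinarith [hx.2]
    rw [Real.norm_eq_abs, abs_of_nonneg (by positivity)]
    calc lam * y ^ 2 / (1 + lam * y * t) ≤ lam * y ^ 2 / 1 := by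
          gcongr <;> first | positivity | linarith
    _ ≤ lam * M ^ 2 := by rw [div_one]; nlinarith [hsq]
  · filter_upwards [aux_ae hM hμM] with x hx
    refine Tendsto.congr' ?_ tendsto_const_nhds
    filter_upwards [phi_ev x hx.1] with m hm
    rw [hm]

end Aux

/-- Fix `M > 0`, a real random variable `ρ` (with law `μ`) with
`P(ρ ∈ [0, M]) = 1` and `P(ρ > 0) > 0`, and `λ > 0` with `λ·E(ρ²) > 1`; let `θ` be the unique
positive solution of `E(λρ²/(1 + λρθ)) = 1`.  For `m ≥ 1` set `ρ_m = ρ·1_{ρ ≥ 1/m}` (so that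
`E g(ρ_m) = ∫ g(x·1_{x ≥ 1/m}) dμ(x)`).  Then for all sufficiently large `m` one has
`λ·E(ρ_m²) > 1`, and, letting `θ_m` denote the unique positive solution of
`E(λρ_m²/(1 + λρ_m θ_m)) = 1`, one has `θ_m → θ` as `m → ∞`. -/
theorem theta_truncation_below_limit (M : ℝ) (hM : 0 < M)
    (μ : Measure ℝ) [IsProbabilityMeasure μ]
    (hμM : μ (Set.Icc (0 : ℝ) M) = 1) (hμpos : 0 < μ (Set.Ioi (0 : ℝ)))
    (lam : ℝ) (hlam : 0 < lam) (hsup : 1 < lam * ∫ x, x ^ 2 ∂μ)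
    (θ : ℝ) (hθpos : 0 < θ) (hθ : ∫ x, lam * x ^ 2 / (1 + lam * x * θ) ∂μ = 1) :
    (∀ᶠ m : ℕ in atTop,
        1 < lam * ∫ x, (if 1 / (m : ℝ) ≤ x then x else 0) ^ 2 ∂μ) ∧
      ∀ θm : ℕ → ℝ,
        (∀ᶠ m : ℕ in atTop, 0 < θm m ∧
            ∫ x, lam * (if 1 / (m : ℝ) ≤ x then x else 0) ^ 2 /
              (1 + lam * (if 1 / (m : ℝ) ≤ x then x else 0) * θm m) ∂μ = 1) →
          Tendsto θm atTop (nhds θ) := by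
  constructor
  · have h := (tendsto_sq hM hμM).const_mul lam
    exact h.eventually (eventually_gt_nhds hsup)
  · intro θm hθm
    rw [Metric.tendsto_nhds]
    intro ε hε
    set ε' := min ε (θ / 2) with hε'def
    have hε'pos : 0 < ε' := lt_min hε (by linarith)
    have hε'le : ε' ≤ ε := min_le_left _ _
    have hθε : 0 ≤ θ - ε' := by
      have := min_le_right ε (θ / 2)
      simp only [← hε'def] at this
      linarith
    have h1 : ∫ x, lam * x ^ 2 / (1 + lam * x * (θ + ε')) ∂μ < 1 := by
      have := aux_strict hlam hM hμM hμpos (t1 := θ) (t2 := θ + ε') hθpos.le (by linarith)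
      rwa [hθ] at this
    have h2 : 1 < ∫ x, lam * x ^ 2 / (1 + lam * x * (θ - ε')) ∂μ := by
      have := aux_strict hlam hM hμM hμpos (t1 := θ - ε') (t2 := θ) hθε (by linarith)
      rwa [hθ] at this
    have t1 := (tendsto_G hlam hM hμM (t := θ + ε') (by linarith)).eventually
      (eventually_lt_nhds h1)
    have t2 := (tendsto_G hlam hM hμM (t := θ - ε') hθε).eventually
      (eventually_gt_nhds h2)
    filter_upwards [t1, t2, hθm] with m hm1 hm2 hm3
    obtain ⟨hmpos, hmeq⟩ := hm3
    have hA : θm m < θ + ε' := by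
      by_contra hc
      push_neg at hc
      have := aux_mono hlam hM (t1 := θ + ε') (t2 := θm m) (by linarith) hc
        (phi_meas m) (phi_bound hM hμM m)
      rw [hmeq] at this
      linarith
    have hB : θ - ε' < θm m := by
      by_contra hc
      push_neg at hc
      have := aux_mono hlam hM (t1 := θm m) (t2 := θ - ε') hmpos.le hc
        (phi_meas m) (phi_bound hM hμM m)
      rw [hmeq] at this
      linarith
    rw [Real.dist_eq, abs_sub_lt_iff]
    constructor <;> linarith
end

section
/- For every d ≥ 1 and all 0 ≤ s < t ≤ M, the extinction probabilities of the branching process with random vertex weights satisfy |F_d(s) − F_d(t)| ≤ λM(t − s). -/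
open MeasureTheory ProbabilityTheory Filter Set

noncomputable section

/-- The sets `W_n` of the branching process with vertex weights on the rooted `d`-ary tree
`𝕋^d` (vertices: finite words over `Fin d`, root: the empty word; `x ⇒ y` iff `y = x ++ [i]`).
Here `w x` is the random weight `ρ(x)`, `Y x` is the rate-one exponential recovery clock of
`x`, and `U x i` is a rate-one exponential clock so that `U x i / ((λ/d) ρ(x) ρ(x ++ [i]))`
is the exponential infection clock of rate `(λ/d) ρ(x) ρ(x ++ [i])` along the edge
`x ⇒ x ++ [i]` (infinite when the rate vanishes).  The child `x ++ [i]` of `x ∈ W_n` lies in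
`W_{n+1}` iff its infection clock rings before the recovery clock of `x`, i.e. iff
`U x i < (λ/d) ρ(x) ρ(x ++ [i]) Y x`. -/
def WSet {Ω : Type} (lam : ℝ) (d : ℕ) (w Y : List (Fin d) → Ω → ℝ)
    (U : List (Fin d) → Fin d → Ω → ℝ) (ω : Ω) : ℕ → Set (List (Fin d))
  | 0 => {([] : List (Fin d))}
  | n + 1 => {y | ∃ x ∈ WSet lam d w Y U ω n, ∃ i : Fin d,
      y = x ++ [i] ∧ U x i ω < lam / d * (w x ω * w (x ++ [i]) ω) * Y x ω}

namespace BPAux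

variable {lam : ℝ} {d : ℕ}

lemma WSet_zero {Ω : Type} (w Y : List (Fin d) → Ω → ℝ) (U : List (Fin d) → Fin d → Ω → ℝ)
    (ω : Ω) : WSet lam d w Y U ω 0 = {([] : List (Fin d))} := rfl

lemma WSet_succ {Ω : Type} (w Y : List (Fin d) → Ω → ℝ) (U : List (Fin d) → Fin d → Ω → ℝ)
    (ω : Ω) (n : ℕ) : WSet lam d w Y U ω (n + 1) = {y | ∃ x ∈ WSet lam d w Y U ω n, ∃ i : Fin d,
      y = x ++ [i] ∧ U x i ω < lam / d * (w x ω * w (x ++ [i]) ω) * Y x ω} := rfl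

lemma length_of_mem_WSet {Ω : Type} {w Y : List (Fin d) → Ω → ℝ}
    {U : List (Fin d) → Fin d → Ω → ℝ} {ω : Ω} :
    ∀ {n : ℕ} {x : List (Fin d)}, x ∈ WSet lam d w Y U ω n → x.length = n := by
  intro n
  induction n with
  | zero => intro x hx; rw [Set.mem_singleton_iff.mp hx]; rfl
  | succ n ih =>
    rintro x ⟨x', hx', i, rfl, -⟩
    simp [ih hx']

lemma WSet_empty_succ {Ω : Type} {w Y : List (Fin d) → Ω → ℝ}
    {U : List (Fin d) → Fin d → Ω → ℝ} {ω : Ω} {n : ℕ}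
    (h : WSet lam d w Y U ω n = ∅) : WSet lam d w Y U ω (n + 1) = ∅ := by
  rw [WSet_succ, h]
  ext y
  simp

lemma WSet_congr {Ω Ω' : Type} {w Y : List (Fin d) → Ω → ℝ} {U : List (Fin d) → Fin d → Ω → ℝ}
    {w' Y' : List (Fin d) → Ω' → ℝ} {U' : List (Fin d) → Fin d → Ω' → ℝ} {ω : Ω} {ω' : Ω'} :
    ∀ {n : ℕ}, (∀ x : List (Fin d), x.length ≤ n → w x ω = w' x ω') →
    (∀ x : List (Fin d), x.length < n → Y x ω = Y' x ω') →
    (∀ (x : List (Fin d)) (i : Fin d), x.length < n → U x i ω = U' x i ω') →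
    WSet lam d w Y U ω n = WSet lam d w' Y' U' ω' n := by
  intro n
  induction n with
  | zero => intro _ _ _; rfl
  | succ n ih =>
    intro h1 h2 h3
    have hW : WSet lam d w Y U ω n = WSet lam d w' Y' U' ω' n :=
      ih (fun x hx => h1 x (hx.trans (Nat.le_succ n)))
        (fun x hx => h2 x (hx.trans (Nat.lt_succ_self n)))
        (fun x i hx => h3 x i (hx.trans (Nat.lt_succ_self n)))
    ext y
    rw [WSet_succ, WSet_succ]
    simp only [Set.mem_setOf_eq, hW]
    refine exists_congr fun x => and_congr_right fun hx => exists_congr fun i =>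
      and_congr_right fun _ => ?_
    have hlen : x.length = n := length_of_mem_WSet hx
    rw [h1 x (by omega), h1 (x ++ [i]) (by simp [hlen]), h2 x (by omega), h3 x i (by omega)]

lemma measurableSet_mem_WSet {Ω : Type} [MeasurableSpace Ω] {w Y : List (Fin d) → Ω → ℝ}
    {U : List (Fin d) → Fin d → Ω → ℝ} (hw : ∀ x, Measurable (w x))
    (hY : ∀ x, Measurable (Y x)) (hU : ∀ x i, Measurable (U x i)) :
    ∀ (n : ℕ) (x : List (Fin d)), MeasurableSet {ω | x ∈ WSet lam d w Y U ω n} := by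
  intro n
  induction n with
  | zero =>
    intro x
    by_cases hx : x = ([] : List (Fin d))
    · subst hx
      have : {ω : Ω | ([] : List (Fin d)) ∈ WSet lam d w Y U ω 0} = Set.univ := by
        ext ω; simp [WSet_zero]
      rw [this]; exact MeasurableSet.univ
    · have : {ω : Ω | x ∈ WSet lam d w Y U ω 0} = ∅ := by
        ext ω; simp [WSet_zero, hx]
      rw [this]; exact MeasurableSet.empty
  | succ n ih =>
    intro x
    have hrep : {ω | x ∈ WSet lam d w Y U ω (n + 1)} =
        ⋃ p : List (Fin d) × Fin d, {ω | x = p.1 ++ [p.2] ∧ p.1 ∈ WSet lam d w Y U ω n ∧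
          U p.1 p.2 ω < lam / d * (w p.1 ω * w (p.1 ++ [p.2]) ω) * Y p.1 ω} := by
      ext ω
      simp only [WSet_succ, Set.mem_setOf_eq, Set.mem_iUnion]
      constructor
      · rintro ⟨x', hx', i, hxe, hlt⟩; exact ⟨(x', i), hxe, hx', hlt⟩
      · rintro ⟨p, hxe, hp, hlt⟩; exact ⟨p.1, hp, p.2, hxe, hlt⟩
    rw [hrep]
    refine MeasurableSet.iUnion fun p => ?_
    by_cases hxp : x = p.1 ++ [p.2]
    · have : {ω | x = p.1 ++ [p.2] ∧ p.1 ∈ WSet lam d w Y U ω n ∧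
          U p.1 p.2 ω < lam / d * (w p.1 ω * w (p.1 ++ [p.2]) ω) * Y p.1 ω} =
          {ω | p.1 ∈ WSet lam d w Y U ω n} ∩
          {ω | U p.1 p.2 ω < lam / d * (w p.1 ω * w (p.1 ++ [p.2]) ω) * Y p.1 ω} := by
        ext ω; simp [hxp]
      rw [this]
      exact (ih p.1).inter (measurableSet_lt (hU p.1 p.2)
        ((measurable_const.mul ((hw p.1).mul (hw (p.1 ++ [p.2])))).mul (hY p.1)))
    · have : {ω | x = p.1 ++ [p.2] ∧ p.1 ∈ WSet lam d w Y U ω n ∧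
          U p.1 p.2 ω < lam / d * (w p.1 ω * w (p.1 ++ [p.2]) ω) * Y p.1 ω} = ∅ := by
        ext ω; simp [hxp]
      rw [this]; exact MeasurableSet.empty

lemma measurableSet_WSet_empty {Ω : Type} [MeasurableSpace Ω] {w Y : List (Fin d) → Ω → ℝ}
    {U : List (Fin d) → Fin d → Ω → ℝ} (hw : ∀ x, Measurable (w x))
    (hY : ∀ x, Measurable (Y x)) (hU : ∀ x i, Measurable (U x i)) (n : ℕ) :
    MeasurableSet {ω | WSet lam d w Y U ω n = ∅} := by
  have : {ω | WSet lam d w Y U ω n = ∅} =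
      ⋂ x : List (Fin d), {ω | x ∈ WSet lam d w Y U ω n}ᶜ := by
    ext ω
    simp [Set.eq_empty_iff_forall_notMem]
  rw [this]
  exact MeasurableSet.iInter fun x => (measurableSet_mem_WSet hw hY hU n x).compl



/-- Restriction of an independent family to a subfamily indexed via an injection. -/
lemma iIndepFun_precomp {Ω : Type} [MeasurableSpace Ω] {P : Measure Ω} {ι κ : Type*}
    {f : ι → Ω → ℝ}
    (hf : iIndepFun (β := fun _ => ℝ) f P)
    {e : κ → ι} (he : Function.Injective e) :
    iIndepFun (β := fun _ => ℝ) (fun k => f (e k)) P := by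
  classical
  rw [iIndepFun_iff] at hf ⊢
  intro s f' hmeas
  set t := s.image e with ht
  set F' : ι → Set Ω := fun i => if h : ∃ k, k ∈ s ∧ e k = i then f' h.choose else Set.univ
    with hF'def
  have hF' : ∀ k ∈ s, F' (e k) = f' k := by
    intro k hk
    have h : ∃ k', k' ∈ s ∧ e k' = e k := ⟨k, hk, rfl⟩
    simp only [hF'def, dif_pos h]
    exact congrArg f' (he h.choose_spec.2)
  have h1 : (⋂ i ∈ t, F' i) = ⋂ k ∈ s, f' k := by
    ext ω
    simp only [Set.mem_iInter, ht, Finset.mem_image]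
    constructor
    · intro h k hk
      have := h (e k) ⟨k, hk, rfl⟩
      rwa [hF' k hk] at this
    · rintro h i ⟨k, hk, rfl⟩
      rw [hF' k hk]; exact h k hk
  have h2 : ∏ i ∈ t, P (F' i) = ∏ k ∈ s, P (f' k) := by
    rw [ht, Finset.prod_image (fun k _ k' _ h => he h)]
    exact Finset.prod_congr rfl fun k hk => by rw [hF' k hk]
  have h3 := hf t (f' := F') (fun i hi => by
    obtain ⟨k, hk, rfl⟩ := Finset.mem_image.mp (ht ▸ hi)
    rw [hF' k hk]; exact hmeas k hk)
  rw [h1] at h3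
  rw [h3, h2]

lemma map_eq_pi {Ω : Type} [MeasurableSpace Ω] (P : Measure Ω) [IsProbabilityMeasure P]
    {ι κ : Type*} [Fintype κ] {f : ι → Ω → ℝ} (hmeas : ∀ i, Measurable (f i))
    (hf : iIndepFun (β := fun _ => ℝ) f P)
    {e : κ → ι} (he : Function.Injective e) :
    P.map (fun ω (k : κ) => f (e k) ω) = Measure.pi (fun k => P.map (f (e k))) := by
  haveI : ∀ k : κ, IsProbabilityMeasure (P.map (f (e k))) :=
    fun k => Measure.isProbabilityMeasure_map (hmeas (e k)).aemeasurable
  refine (Measure.pi_eq fun A hA => ?_).symm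
  have hPhi : Measurable (fun ω (k : κ) => f (e k) ω) :=
    measurable_pi_lambda _ fun k => hmeas (e k)
  rw [Measure.map_apply hPhi (MeasurableSet.univ_pi hA)]
  have hpre : (fun ω (k : κ) => f (e k) ω) ⁻¹' (Set.pi Set.univ A) = ⋂ k, f (e k) ⁻¹' A k := by
    ext ω; simp [Set.mem_pi]
  rw [hpre, (iIndepFun_precomp hf he).meas_iInter (fun k => ⟨A k, hA k, rfl⟩)]
  exact Finset.prod_congr rfl fun k _ => (Measure.map_apply (hmeas (e k)) (hA k)).symm

lemma gammaPDF_one_one_le_one (x : ℝ) : gammaPDF 1 1 x ≤ 1 := by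
  by_cases hx : 0 ≤ x
  · rw [gammaPDF_of_nonneg hx]
    rw [ENNReal.ofReal_le_one]
    have : (1 : ℝ) ^ (1 : ℝ) / Real.Gamma 1 * x ^ ((1 : ℝ) - 1) * Real.exp (-(1 * x)) =
        Real.exp (-x) := by
      simp [Real.Gamma_one, Real.one_rpow, Real.rpow_zero]
    rw [this]
    exact Real.exp_le_one_iff.mpr (by linarith)
  · rw [gammaPDF_of_neg (by linarith)]
    exact zero_le_one

lemma expMeasure_Ico_le (a b : ℝ) : expMeasure 1 (Set.Ico a b) ≤ ENNReal.ofReal (b - a) := by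
  rw [expMeasure, gammaMeasure, withDensity_apply _ measurableSet_Ico]
  calc ∫⁻ x in Set.Ico a b, gammaPDF 1 1 x ≤ ∫⁻ _ in Set.Ico a b, 1 :=
        lintegral_mono fun x => gammaPDF_one_one_le_one x
    _ = volume (Set.Ico a b) := setLIntegral_one _
    _ = ENNReal.ofReal (b - a) := Real.volume_Ico

lemma expMeasure_Iio_zero : expMeasure 1 (Set.Iio 0) = 0 := by
  rw [expMeasure, gammaMeasure, withDensity_apply _ measurableSet_Iio]
  exact lintegral_gammaPDF_of_nonpos le_rfl

lemma exp_mean : ∫⁻ y, ENNReal.ofReal y ∂(expMeasure 1) = 1 := by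
  have hpdfm : Measurable (gammaPDF 1 1) := (measurable_gammaPDFReal 1 1).ennreal_ofReal
  rw [expMeasure, gammaMeasure,
    lintegral_withDensity_eq_lintegral_mul _ hpdfm ENNReal.measurable_ofReal]
  have hfun : ∀ y, (gammaPDF 1 1 * fun y => ENNReal.ofReal y) y =
      (Set.Ioi (0 : ℝ)).indicator (fun y => ENNReal.ofReal (Real.exp (-y) * y)) y := by
    intro y
    simp only [Pi.mul_apply, Set.indicator_apply, Set.mem_Ioi]
    by_cases hy : 0 < y
    · rw [if_pos hy, gammaPDF_of_nonneg hy.le]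
      have : (1 : ℝ) ^ (1 : ℝ) / Real.Gamma 1 * y ^ ((1 : ℝ) - 1) * Real.exp (-(1 * y)) =
          Real.exp (-y) := by
        simp [Real.Gamma_one, Real.one_rpow, Real.rpow_zero]
      rw [this, ← ENNReal.ofReal_mul (Real.exp_nonneg _)]
    · rw [if_neg hy]
      rcases lt_or_eq_of_le (not_lt.mp hy) with h | h
      · rw [gammaPDF_of_neg h, zero_mul]
      · subst h; simp
  rw [lintegral_congr hfun, lintegral_indicator measurableSet_Ioi _]
  have hint : IntegrableOn (fun y : ℝ => Real.exp (-y) * y) (Set.Ioi 0) := by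
    have := Real.GammaIntegral_convergent (s := 2) (by norm_num)
    simpa [show (2:ℝ)-1 = 1 by norm_num, Real.rpow_one] using this
  have hnn : 0 ≤ᵐ[volume.restrict (Set.Ioi (0:ℝ))] fun y => Real.exp (-y) * y := by
    filter_upwards [self_mem_ae_restrict measurableSet_Ioi] with y hy
    exact mul_nonneg (Real.exp_nonneg _) (le_of_lt hy)
  rw [← ofReal_integral_eq_lintegral_ofReal hint hnn]
  have hΓ : ∫ y in Set.Ioi (0:ℝ), Real.exp (-y) * y = Real.Gamma 2 := by
    rw [Real.Gamma_eq_integral (by norm_num : (0:ℝ) < 2)]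
    norm_num [Real.rpow_one]
  rw [hΓ]
  norm_num

/-- Words of length at most `n`. -/
abbrev WordLE (d n : ℕ) := {x : List (Fin d) // x.length ≤ n}

instance (d n : ℕ) : Finite (WordLE d n) :=
  Set.Finite.to_subtype (List.finite_length_le (Fin d) n)

noncomputable instance (d n : ℕ) : Fintype (WordLE d n) := Fintype.ofFinite _

/-- Full index type of the family of random variables. -/
abbrev Idx (d : ℕ) := List (Fin d) ⊕ List (Fin d) ⊕ List (Fin d) × Fin d

/-- Finite index type for the variables relevant up to generation `n`. -/
abbrev KIdx (d n : ℕ) := WordLE d n ⊕ WordLE d n ⊕ WordLE d n × Fin d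

def emb (d n : ℕ) : KIdx d n → Idx d :=
  Sum.elim (fun x => Sum.inl x.val)
    (Sum.elim (fun x => Sum.inr (Sum.inl x.val)) (fun p => Sum.inr (Sum.inr (p.1.val, p.2))))

lemma emb_injective (d n : ℕ) : Function.Injective (emb d n) := by
  rintro (x | x | ⟨x, i⟩) (y | y | ⟨y, j⟩) h <;>
    simp only [emb, Sum.elim_inl, Sum.elim_inr, Sum.inl.injEq, Sum.inr.injEq,
      Prod.mk.injEq] at h
  · exact congrArg Sum.inl (Subtype.ext h)
  · exact absurd h (by simp)
  · exact absurd h (by simp)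
  · exact absurd h (by simp)
  · exact congrArg (Sum.inr ∘ Sum.inl) (Subtype.ext h)
  · exact absurd h (by simp)
  · exact absurd h (by simp)
  · exact absurd h (by simp)
  · exact congrArg (fun q => Sum.inr (Sum.inr q)) (Prod.ext (Subtype.ext h.1) h.2)

/-- Extend a finite configuration to a full configuration by `0`. -/
def extK (d n : ℕ) (h : KIdx d n → ℝ) : Idx d → ℝ :=
  Sum.elim (fun x => if hx : x.length ≤ n then h (Sum.inl ⟨x, hx⟩) else 0)
    (Sum.elim (fun x => if hx : x.length ≤ n then h (Sum.inr (Sum.inl ⟨x, hx⟩)) else 0)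
      (fun p => if hx : p.1.length ≤ n then h (Sum.inr (Sum.inr (⟨p.1, hx⟩, p.2))) else 0))

lemma measurable_extK (d n : ℕ) : Measurable (extK d n) := by
  refine measurable_pi_lambda _ fun j => ?_
  rcases j with x | x | ⟨x, i⟩
  · by_cases hx : x.length ≤ n
    · simp only [extK, Sum.elim_inl, dif_pos hx]; exact measurable_pi_apply _
    · simp only [extK, Sum.elim_inl, dif_neg hx]; exact measurable_const
  · by_cases hx : x.length ≤ n
    · simp only [extK, Sum.elim_inr, Sum.elim_inl, dif_pos hx]; exact measurable_pi_apply _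
    · simp only [extK, Sum.elim_inr, Sum.elim_inl, dif_neg hx]; exact measurable_const
  · by_cases hx : x.length ≤ n
    · simp only [extK, Sum.elim_inr, dif_pos hx]; exact measurable_pi_apply _
    · simp only [extK, Sum.elim_inr, dif_neg hx]; exact measurable_const

/-- Canonical coordinate processes on the configuration space. -/
def cw (d : ℕ) (x : List (Fin d)) : (Idx d → ℝ) → ℝ := fun f => f (Sum.inl x)
def cY (d : ℕ) (x : List (Fin d)) : (Idx d → ℝ) → ℝ := fun f => f (Sum.inr (Sum.inl x))
def cU (d : ℕ) (x : List (Fin d)) (i : Fin d) : (Idx d → ℝ) → ℝ :=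
  fun f => f (Sum.inr (Sum.inr (x, i)))

/-- The canonical event `{W_n = ∅}` expressed on the finite configuration space. -/
def AFin (lam : ℝ) (d n : ℕ) : Set (KIdx d n → ℝ) :=
  {h | WSet lam d (cw d) (cY d) (cU d) (extK d n h) n = ∅}

lemma measurableSet_AFin (lam : ℝ) (d n : ℕ) : MeasurableSet (AFin lam d n) := by
  have h1 : MeasurableSet {f : Idx d → ℝ | WSet lam d (cw d) (cY d) (cU d) f n = ∅} :=
    measurableSet_WSet_empty (fun x => measurable_pi_apply _)
      (fun x => measurable_pi_apply _) (fun x i => measurable_pi_apply _) n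
  exact h1.preimage (measurable_extK d n)

/-- The canonical marginal laws. -/
def nu (μ : Measure ℝ) (s : ℝ) (d n : ℕ) : KIdx d n → Measure ℝ :=
  Sum.elim (fun x => if x.val = ([] : List (Fin d)) then Measure.dirac s else μ)
    (Sum.elim (fun _ => expMeasure 1) (fun _ => expMeasure 1))

/-- The canonical value of `P({W_n = ∅})`. -/
def canval (μ : Measure ℝ) (lam s : ℝ) (d n : ℕ) : ENNReal :=
  Measure.pi (nu μ s d n) (AFin lam d n)

lemma extinction_eq (μ : Measure ℝ) (s : ℝ) {Ω : Type} [MeasurableSpace Ω] (P : Measure Ω)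
    [IsProbabilityMeasure P] (w Y : List (Fin d) → Ω → ℝ) (U : List (Fin d) → Fin d → Ω → ℝ)
    (hw : ∀ x, Measurable (w x)) (hY : ∀ x, Measurable (Y x)) (hU : ∀ x i, Measurable (U x i))
    (hwlaw : ∀ x, P.map (w x) = if x = ([] : List (Fin d)) then Measure.dirac s else μ)
    (hYlaw : ∀ x, P.map (Y x) = expMeasure 1) (hUlaw : ∀ x i, P.map (U x i) = expMeasure 1)
    (hIndep : iIndepFun (β := fun _ => ℝ)
      (Sum.elim w (Sum.elim Y (fun p : List (Fin d) × Fin d => U p.1 p.2))) P) :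
    P {ω | ∃ n, WSet lam d w Y U ω n = ∅} = ⨆ n, canval μ lam s d n := by
  classical
  set g : Idx d → Ω → ℝ := Sum.elim w (Sum.elim Y (fun p => U p.1 p.2)) with hg
  have hgm : ∀ j, Measurable (g j) := by
    rintro (x | x | ⟨x, i⟩)
    · exact hw x
    · exact hY x
    · exact hU x i
  have hmono : Monotone (fun n => {ω | WSet lam d w Y U ω n = ∅}) :=
    monotone_nat_of_le_succ fun n ω h => WSet_empty_succ h
  have hset : {ω | ∃ n, WSet lam d w Y U ω n = ∅} =
      ⋃ n, {ω | WSet lam d w Y U ω n = ∅} := Set.setOf_exists _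
  rw [hset, Directed.measure_iUnion hmono.directed_le]
  refine iSup_congr fun n => ?_
  have hPhi : Measurable (fun ω (k : KIdx d n) => g (emb d n k) ω) :=
    measurable_pi_lambda _ fun k => hgm _
  have hA : MeasurableSet (AFin lam d n) := measurableSet_AFin lam d n
  have hsetn : {ω | WSet lam d w Y U ω n = ∅} =
      (fun ω (k : KIdx d n) => g (emb d n k) ω) ⁻¹' (AFin lam d n) := by
    ext ω
    have hcongr : WSet lam d w Y U ω n =
        WSet lam d (cw d) (cY d) (cU d) (extK d n (fun k => g (emb d n k) ω)) n := by
      apply WSet_congr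
      · intro x hx
        simp only [cw, extK, Sum.elim_inl, dif_pos hx]
        rfl
      · intro x hx
        simp only [cY, extK, Sum.elim_inr, Sum.elim_inl, dif_pos hx.le]
        rfl
      · intro x i hx
        simp only [cU, extK, Sum.elim_inr, dif_pos hx.le]
        rfl
    simp only [Set.mem_setOf_eq, Set.mem_preimage, AFin, hcongr]
  rw [hsetn, ← Measure.map_apply hPhi hA,
    map_eq_pi P hgm hIndep (emb_injective d n)]
  unfold canval
  have hmarg : (fun k : KIdx d n => P.map (g (emb d n k))) = nu μ s d n := by
    funext k
    rcases k with x | x | ⟨x, i⟩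
    · show P.map (w x.val) = _
      rw [hwlaw x.val]
      simp only [nu, Sum.elim_inl]
    · show P.map (Y x.val) = _
      rw [hYlaw x.val]
      simp only [nu, Sum.elim_inr, Sum.elim_inl]
    · show P.map (U x.val i) = _
      rw [hUlaw x.val i]
      simp only [nu, Sum.elim_inr]
  rw [hmarg]

end BPAux

/-- The random environment of the branching process with random vertex weights on `𝕋^d`:
i.i.d. vertex weights with law `μ`, i.i.d. rate-one exponential recovery clocks and i.i.d.
rate-one exponential edge clocks, all jointly independent; `P̂_{λ,d}` is the (annealed)
probability measure `P`. -/
structure TreeModel {Ω : Type} [MeasurableSpace Ω] (P : Measure Ω)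
    (μ : Measure ℝ) (lam : ℝ) (d : ℕ) where
  hprob : IsProbabilityMeasure P
  w : List (Fin d) → Ω → ℝ
  Y : List (Fin d) → Ω → ℝ
  U : List (Fin d) → Fin d → Ω → ℝ
  hw : ∀ x, Measurable (w x)
  hY : ∀ x, Measurable (Y x)
  hU : ∀ x i, Measurable (U x i)
  hwlaw : ∀ x, P.map (w x) = μ
  hYlaw : ∀ x, P.map (Y x) = expMeasure 1
  hUlaw : ∀ x i, P.map (U x i) = expMeasure 1
  hIndep : iIndepFun
    (β := fun _ : List (Fin d) ⊕ List (Fin d) ⊕ List (Fin d) × Fin d => ℝ)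
    (Sum.elim w (Sum.elim Y (fun p => U p.1 p.2))) P
/-- The random environment of the branching process on `𝕋^d` in which the weight of the
root is deterministically equal to `s`, all other vertex weights being i.i.d. with law `μ`;
the recovery and edge clocks are as in `TreeModel`. -/
structure TreeModelRoot {Ω : Type} [MeasurableSpace Ω] (P : Measure Ω)
    (μ : Measure ℝ) (lam : ℝ) (d : ℕ) (s : ℝ) where
  hprob : IsProbabilityMeasure P
  w : List (Fin d) → Ω → ℝ
  Y : List (Fin d) → Ω → ℝ
  U : List (Fin d) → Fin d → Ω → ℝ
  hw : ∀ x, Measurable (w x)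
  hY : ∀ x, Measurable (Y x)
  hU : ∀ x i, Measurable (U x i)
  hroot : ∀ ω, w ([] : List (Fin d)) ω = s
  hwlaw : ∀ x, x ≠ ([] : List (Fin d)) → P.map (w x) = μ
  hYlaw : ∀ x, P.map (Y x) = expMeasure 1
  hUlaw : ∀ x i, P.map (U x i) = expMeasure 1
  hIndep : iIndepFun
    (β := fun _ : List (Fin d) ⊕ List (Fin d) ⊕ List (Fin d) × Fin d => ℝ)
    (Sum.elim w (Sum.elim Y (fun p => U p.1 p.2))) P

open BPAux

/-- For every `d ≥ 1` and all `0 ≤ s < t ≤ M`, the extinction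
probabilities `F d s = P̂_{λ,d}(W_n = ∅ for some n ≥ 0)` (root weight set to `s`) of the
branching process with random vertex weights satisfy `|F_d(s) − F_d(t)| ≤ λM(t − s)`. -/
theorem F_lipschitz (M : ℝ) (hM : 0 < M)
    (μ : Measure ℝ) [IsProbabilityMeasure μ]
    (hμM : μ (Set.Icc (0 : ℝ) M) = 1) (hμpos : 0 < μ (Set.Ioi (0 : ℝ)))
    (lam : ℝ) (hlam : 0 < lam)
    (Ω : ℕ → ℝ → Type) (mΩ : ∀ d s, MeasurableSpace (Ω d s))
    (P : ∀ d s, @Measure (Ω d s) (mΩ d s))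
    (B : ∀ d s, TreeModelRoot (P d s) μ lam d s)
    (F : ℕ → ℝ → ℝ)
    (hF : ∀ d s, F d s = ((P d s)
      {ω | ∃ n : ℕ, WSet lam d (B d s).w (B d s).Y (B d s).U ω n = ∅}).toReal) :
    ∀ d : ℕ, 1 ≤ d → ∀ s t : ℝ, 0 ≤ s → s < t → t ≤ M →
      |F d s - F d t| ≤ lam * M * (t - s) := by
  intro d hd s t hs hst htM
  classical
  haveI hPs : IsProbabilityMeasure (P d s) := (B d s).hprob
  haveI hPt : IsProbabilityMeasure (P d t) := (B d t).hprob
  haveI hexp : IsProbabilityMeasure (expMeasure 1) := isProbabilityMeasure_expMeasure one_pos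
  rw [hF d s, hF d t]
  -- Step 1: the law of the extinction event depends only on the parameters.
  have hwlaw_s : ∀ x : List (Fin d), (P d s).map ((B d s).w x) =
      if x = ([] : List (Fin d)) then Measure.dirac s else μ := by
    intro x
    by_cases hx : x = ([] : List (Fin d))
    · subst hx
      rw [if_pos rfl, show (B d s).w ([] : List (Fin d)) = fun _ => s from funext ((B d s).hroot),
        Measure.map_const, measure_univ, one_smul]
    · rw [if_neg hx]; exact (B d s).hwlaw x hx
  have hs_eq := extinction_eq (lam := lam) μ s (P d s) (B d s).w (B d s).Y (B d s).U
    (B d s).hw (B d s).hY (B d s).hU hwlaw_s (B d s).hYlaw (B d s).hUlaw (B d s).hIndep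
  -- The modified model on `Ω d t` whose root weight is `s`.
  set w' : List (Fin d) → Ω d t → ℝ :=
    Function.update (B d t).w ([] : List (Fin d)) (fun _ => s) with hw'def
  have hw'root : w' ([] : List (Fin d)) = fun _ => s := Function.update_self _ _ _
  have hw'ne : ∀ x : List (Fin d), x ≠ [] → w' x = (B d t).w x :=
    fun x hx => Function.update_of_ne hx _ _
  have hw'meas : ∀ x, Measurable (w' x) := by
    intro x
    by_cases hx : x = ([] : List (Fin d))
    · subst hx; rw [hw'root]; exact measurable_const
    · rw [hw'ne x hx]; exact (B d t).hw x
  have hwlaw' : ∀ x : List (Fin d), (P d t).map (w' x) =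
      if x = ([] : List (Fin d)) then Measure.dirac s else μ := by
    intro x
    by_cases hx : x = ([] : List (Fin d))
    · subst hx; rw [if_pos rfl, hw'root, Measure.map_const, measure_univ, one_smul]
    · rw [if_neg hx, hw'ne x hx]; exact (B d t).hwlaw x hx
  have hIndep' : iIndepFun (β := fun _ => ℝ)
      (Sum.elim w' (Sum.elim (B d t).Y
        (fun p : List (Fin d) × Fin d => (B d t).U p.1 p.2))) (P d t) := by
    have h := (B d t).hIndep
    rw [iIndepFun_iff_iIndep] at h ⊢
    have hco : (fun j : Idx d => MeasurableSpace.comap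
        (Sum.elim w' (Sum.elim (B d t).Y
          (fun p : List (Fin d) × Fin d => (B d t).U p.1 p.2)) j) inferInstance) =
        (fun j : Idx d => MeasurableSpace.comap
        (Sum.elim (B d t).w (Sum.elim (B d t).Y
          (fun p : List (Fin d) × Fin d => (B d t).U p.1 p.2)) j) inferInstance) := by
      funext j
      rcases j with x | j
      · simp only [Sum.elim_inl]
        by_cases hx : x = ([] : List (Fin d))
        · subst hx
          rw [hw'root, show (B d t).w ([] : List (Fin d)) = fun _ => t from funext ((B d t).hroot),
            MeasurableSpace.comap_const, MeasurableSpace.comap_const]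
        · rw [hw'ne x hx]
      · rfl
    rw [hco]
    exact h
  have ht_eq := extinction_eq (lam := lam) μ s (P d t) w' (B d t).Y (B d t).U
    hw'meas (B d t).hY (B d t).hU hwlaw' (B d t).hYlaw (B d t).hUlaw hIndep'
  set E' : Set (Ω d t) := {ω | ∃ n, WSet lam d w' (B d t).Y (B d t).U ω n = ∅} with hE'def
  set E : Set (Ω d t) :=
    {ω | ∃ n, WSet lam d (B d t).w (B d t).Y (B d t).U ω n = ∅} with hEdef
  have hEE : (P d s) {ω | ∃ n, WSet lam d (B d s).w (B d s).Y (B d s).U ω n = ∅}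
      = (P d t) E' := by rw [hs_eq, hE'def, ht_eq]
  -- Step 2: the two extinction events on `Ω d t` differ only on `D`.
  set C : Fin d → Set (Ω d t) := fun i => {ω |
    ¬ ((B d t).U [] i ω < lam / d * (s * (B d t).w [i] ω) * (B d t).Y [] ω ↔
       (B d t).U [] i ω < lam / d * (t * (B d t).w [i] ω) * (B d t).Y [] ω)} with hCdef
  set D : Set (Ω d t) := ⋃ i, C i with hDdef
  have hagree : ∀ ω, ω ∉ D → ∀ n, WSet lam d w' (B d t).Y (B d t).U ω n
      = WSet lam d (B d t).w (B d t).Y (B d t).U ω n := by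
    intro ω hω n
    induction n with
    | zero => rfl
    | succ n ih =>
      ext y
      rw [WSet_succ, WSet_succ]
      simp only [Set.mem_setOf_eq, ih]
      refine exists_congr fun x => and_congr_right fun hx => exists_congr fun i =>
        and_congr_right fun _ => ?_
      have hlen : x.length = n := length_of_mem_WSet hx
      cases n with
      | zero =>
        have hx0 : x = ([] : List (Fin d)) := List.length_eq_zero_iff.mp hlen
        subst hx0
        rw [show w' ([] : List (Fin d)) ω = s from by rw [hw'root],
          hw'ne (([] : List (Fin d)) ++ [i]) (by simp), (B d t).hroot ω]
        have hni : ω ∉ C i := fun hc => hω (Set.mem_iUnion.mpr ⟨i, hc⟩)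
        exact not_not.mp hni
      | succ m =>
        have hx0 : x ≠ ([] : List (Fin d)) := by
          intro h; rw [h] at hlen; exact absurd hlen (by simp)
        rw [hw'ne x hx0, hw'ne (x ++ [i]) (by simp)]
  have hsub1 : E' ⊆ E ∪ D := by
    intro ω hω
    by_cases hD : ω ∈ D
    · exact Or.inr hD
    · obtain ⟨n, hn⟩ := hω
      exact Or.inl ⟨n, by rw [← hagree ω hD n]; exact hn⟩
  have hsub2 : E ⊆ E' ∪ D := by
    intro ω hω
    by_cases hD : ω ∈ D
    · exact Or.inr hD
    · obtain ⟨n, hn⟩ := hω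
      exact Or.inl ⟨n, by rw [hagree ω hD n]; exact hn⟩
  -- Step 3: bound the probability of each discrepancy event.
  have hCbound : ∀ i : Fin d, (P d t) (C i) ≤ ENNReal.ofReal (lam / d * ((t - s) * M)) := by
    intro i
    have hwi : Measurable ((B d t).w [i]) := (B d t).hw _
    have hY0 : Measurable ((B d t).Y ([] : List (Fin d))) := (B d t).hY _
    have hU0 : Measurable ((B d t).U ([] : List (Fin d)) i) := (B d t).hU _ _
    set V : Ω d t → ℝ × ℝ := fun ω => ((B d t).w [i] ω, (B d t).Y ([] : List (Fin d)) ω)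
      with hVdef
    have hV : Measurable V := hwi.prodMk hY0
    have hgm : ∀ j : Idx d, Measurable ((Sum.elim (B d t).w (Sum.elim (B d t).Y
        (fun p : List (Fin d) × Fin d => (B d t).U p.1 p.2))) j) := by
      rintro (x | x | ⟨x, j⟩)
      · exact (B d t).hw x
      · exact (B d t).hY x
      · exact (B d t).hU x j
    have hInd : IndepFun V ((B d t).U ([] : List (Fin d)) i) (P d t) :=
      (B d t).hIndep.indepFun_prodMk hgm (Sum.inl [i])
        (Sum.inr (Sum.inl ([] : List (Fin d)))) (Sum.inr (Sum.inr (([] : List (Fin d)), i)))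
        (by simp) (by simp)
    set T : Set ((ℝ × ℝ) × ℝ) := {q | q.1.1 ∈ Set.Icc (0:ℝ) M ∧ 0 ≤ q.1.2 ∧
        (lam / d * (s * q.1.1) * q.1.2 ≤ q.2 ∧ q.2 < lam / d * (t * q.1.1) * q.1.2)} with hTdef
    have hT : MeasurableSet T := by
      have m1 : Measurable fun q : (ℝ × ℝ) × ℝ => q.1.1 := measurable_fst.fst
      have m2 : Measurable fun q : (ℝ × ℝ) × ℝ => q.1.2 := measurable_fst.snd
      have m3 : Measurable fun q : (ℝ × ℝ) × ℝ => q.2 := measurable_snd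
      rw [hTdef, Set.setOf_and, Set.setOf_and, Set.setOf_and]
      exact (m1 measurableSet_Icc).inter ((m2 measurableSet_Ici).inter
        ((measurableSet_le ((measurable_const.mul (measurable_const.mul m1)).mul m2) m3).inter
         (measurableSet_lt m3 ((measurable_const.mul (measurable_const.mul m1)).mul m2))))
    have hsubC : C i ⊆ (fun ω => (V ω, (B d t).U ([] : List (Fin d)) i ω)) ⁻¹' T ∪
        ((B d t).w [i] ⁻¹' (Set.Icc (0:ℝ) M)ᶜ ∪
          (B d t).Y ([] : List (Fin d)) ⁻¹' Set.Iio (0:ℝ)) := by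
      intro ω hω
      by_cases h1 : (B d t).w [i] ω ∈ Set.Icc (0:ℝ) M
      · by_cases h2 : 0 ≤ (B d t).Y ([] : List (Fin d)) ω
        · left
          have hk : 0 ≤ lam / (d:ℝ) := div_nonneg hlam.le (Nat.cast_nonneg d)
          have hab : lam / d * (s * (B d t).w [i] ω) * (B d t).Y [] ω ≤
              lam / d * (t * (B d t).w [i] ω) * (B d t).Y [] ω := by
            have hmul : s * (B d t).w [i] ω ≤ t * (B d t).w [i] ω :=
              mul_le_mul_of_nonneg_right hst.le h1.1
            exact mul_le_mul_of_nonneg_right (mul_le_mul_of_nonneg_left hmul hk) h2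
          refine ⟨h1, h2, ?_, ?_⟩
          · by_contra hUa
            push_neg at hUa
            exact hω ⟨fun _ => lt_of_lt_of_le hUa hab, fun _ => hUa⟩
          · by_contra hUb
            exact hω ⟨fun hu => lt_of_lt_of_le hu hab, fun hu => absurd hu hUb⟩
        · exact Or.inr (Or.inr (not_le.mp h2))
      · exact Or.inr (Or.inl h1)
    have hnull1 : (P d t) ((B d t).w [i] ⁻¹' (Set.Icc (0:ℝ) M)ᶜ) = 0 := by
      rw [← Measure.map_apply hwi measurableSet_Icc.compl, (B d t).hwlaw [i] (by simp),
        measure_compl measurableSet_Icc (measure_ne_top _ _), hμM, measure_univ]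
      simp
    have hnull2 : (P d t) ((B d t).Y ([] : List (Fin d)) ⁻¹' Set.Iio (0:ℝ)) = 0 := by
      rw [← Measure.map_apply hY0 measurableSet_Iio, (B d t).hYlaw ([] : List (Fin d))]
      exact expMeasure_Iio_zero
    have hmain : (P d t) ((fun ω => (V ω, (B d t).U ([] : List (Fin d)) i ω)) ⁻¹' T) ≤
        ENNReal.ofReal (lam / d * ((t - s) * M)) := by
      rw [← Measure.map_apply (hV.prodMk hU0) hT,
        (indepFun_iff_map_prod_eq_prod_map_map hV.aemeasurable hU0.aemeasurable).mp hInd,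
        (B d t).hUlaw ([] : List (Fin d)) i, Measure.prod_apply hT]
      have hslice : ∀ p : ℝ × ℝ, expMeasure 1 (Prod.mk p ⁻¹' T) ≤
          ENNReal.ofReal (lam / d * ((t - s) * M)) * ENNReal.ofReal p.2 := by
        intro p
        by_cases hp : p.1 ∈ Set.Icc (0:ℝ) M ∧ 0 ≤ p.2
        · have hsubT : Prod.mk p ⁻¹' T ⊆
              Set.Ico (lam / d * (s * p.1) * p.2) (lam / d * (t * p.1) * p.2) :=
            fun u hu => ⟨hu.2.2.1, hu.2.2.2⟩
          refine le_trans (measure_mono hsubT) (le_trans (expMeasure_Ico_le _ _) ?_)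
          have hk : 0 ≤ lam / (d:ℝ) := div_nonneg hlam.le (Nat.cast_nonneg d)
          have hcnn : (0:ℝ) ≤ lam / d * ((t - s) * M) :=
            mul_nonneg hk (mul_nonneg (sub_nonneg.mpr hst.le) hM.le)
          rw [← ENNReal.ofReal_mul hcnn]
          apply ENNReal.ofReal_le_ofReal
          have h1 := hp.1.1
          have h2 := hp.1.2
          have h3 := hp.2
          have key : 0 ≤ (M - p.1) * (lam / d * (t - s) * p.2) :=
            mul_nonneg (sub_nonneg.mpr h2)
              (mul_nonneg (mul_nonneg hk (sub_nonneg.mpr hst.le)) h3)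
          nlinarith [key]
        · have hempty : Prod.mk p ⁻¹' T = ∅ := by
            ext u
            simp only [Set.mem_preimage, hTdef, Set.mem_setOf_eq, Set.mem_empty_iff_false,
              iff_false]
            intro hu
            exact hp ⟨hu.1, hu.2.1⟩
          rw [hempty, measure_empty]
          exact bot_le
      have hsnd : ∫⁻ p, ENNReal.ofReal p.2 ∂((P d t).map V) = 1 := by
        have hstep : ∫⁻ p, ENNReal.ofReal p.2 ∂((P d t).map V)
            = ∫⁻ y, ENNReal.ofReal y ∂((P d t).map ((B d t).Y ([] : List (Fin d)))) := by
          rw [lintegral_map measurable_snd.ennreal_ofReal hV,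
            lintegral_map ENNReal.measurable_ofReal hY0]
        rw [hstep, (B d t).hYlaw ([] : List (Fin d)), exp_mean]
      calc ∫⁻ p, expMeasure 1 (Prod.mk p ⁻¹' T) ∂((P d t).map V)
          ≤ ∫⁻ p, ENNReal.ofReal (lam / d * ((t - s) * M)) * ENNReal.ofReal p.2
            ∂((P d t).map V) := lintegral_mono hslice
        _ = ENNReal.ofReal (lam / d * ((t - s) * M)) *
            ∫⁻ p, ENNReal.ofReal p.2 ∂((P d t).map V) :=
            lintegral_const_mul _ measurable_snd.ennreal_ofReal
        _ = ENNReal.ofReal (lam / d * ((t - s) * M)) := by rw [hsnd, mul_one]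
    calc (P d t) (C i)
        ≤ (P d t) ((fun ω => (V ω, (B d t).U ([] : List (Fin d)) i ω)) ⁻¹' T) +
          ((P d t) ((B d t).w [i] ⁻¹' (Set.Icc (0:ℝ) M)ᶜ) +
           (P d t) ((B d t).Y ([] : List (Fin d)) ⁻¹' Set.Iio (0:ℝ))) :=
          le_trans (measure_mono hsubC) (le_trans (measure_union_le _ _)
            (add_le_add le_rfl (measure_union_le _ _)))
      _ = (P d t) ((fun ω => (V ω, (B d t).U ([] : List (Fin d)) i ω)) ⁻¹' T) := by
          rw [hnull1, hnull2]; simp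
      _ ≤ ENNReal.ofReal (lam / d * ((t - s) * M)) := hmain
  have hDbound : (P d t) D ≤ ENNReal.ofReal (lam * M * (t - s)) := by
    have hd0 : (d:ℝ) ≠ 0 := Nat.cast_ne_zero.mpr (by omega)
    calc (P d t) D ≤ ∑ i : Fin d, (P d t) (C i) := measure_iUnion_fintype_le _ _
      _ ≤ ∑ _i : Fin d, ENNReal.ofReal (lam / d * ((t - s) * M)) :=
          Finset.sum_le_sum fun i _ => hCbound i
      _ = (d : ENNReal) * ENNReal.ofReal (lam / d * ((t - s) * M)) :=
          by rw [Finset.sum_const, Finset.card_univ, Fintype.card_fin, nsmul_eq_mul]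
      _ = ENNReal.ofReal ((d:ℝ) * (lam / d * ((t - s) * M))) :=
          by rw [ENNReal.ofReal_mul (Nat.cast_nonneg d), ENNReal.ofReal_natCast]
      _ = ENNReal.ofReal (lam * M * (t - s)) := by
          congr 1
          field_simp
  -- Step 4: conclude.
  have hfin : ∀ S : Set (Ω d t), (P d t) S ≠ ⊤ := fun S => measure_ne_top _ _
  have h1 : (P d t) E' ≤ (P d t) E + (P d t) D :=
    le_trans (measure_mono hsub1) (measure_union_le _ _)
  have h2 : (P d t) E ≤ (P d t) E' + (P d t) D :=
    le_trans (measure_mono hsub2) (measure_union_le _ _)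
  have hle1 : ((P d t) E').toReal ≤ ((P d t) E).toReal + ((P d t) D).toReal := by
    have h := ENNReal.toReal_mono (ENNReal.add_ne_top.mpr ⟨hfin _, hfin _⟩) h1
    rwa [ENNReal.toReal_add (hfin _) (hfin _)] at h
  have hle2 : ((P d t) E).toReal ≤ ((P d t) E').toReal + ((P d t) D).toReal := by
    have h := ENNReal.toReal_mono (ENNReal.add_ne_top.mpr ⟨hfin _, hfin _⟩) h2
    rwa [ENNReal.toReal_add (hfin _) (hfin _)] at h
  have hDR : ((P d t) D).toReal ≤ lam * M * (t - s) := by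
    have h := ENNReal.toReal_mono ENNReal.ofReal_ne_top hDbound
    rwa [ENNReal.toReal_ofReal
      (mul_nonneg (mul_nonneg hlam.le hM.le) (sub_nonneg.mpr hst.le))] at h
  rw [hEE]
  rw [abs_sub_le_iff]
  constructor <;> linarith
end
end

section
/- Assume there is a constant c₃ > 0 such that ℙ_d(τ_{O,O} < +∞) ≤ 1/d + c₃/d² for every d ≥ 4. Then there exists a constant c₁ > 0, not depending on d, such that for every d ≥ 4 and all x, y ∈ ℤ₊^d with x ≠ y and ‖x‖ ≤ ‖y‖, ℙ_d(τ_{x,y} < +∞) ≤ c₁/√d. -/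
open MeasureTheory ProbabilityTheory Filter Set

noncomputable section

/-- The oriented random walk on `ℤ₊^d` started at `x` whose `m`-th increment is the
standard basis vector `e_{inc m}`: its position after `k` steps. -/
def walkRW {Ω : Type} {d : ℕ} (x : Fin d → ℕ) (inc : ℕ → Ω → Fin d) (k : ℕ) (ω : Ω) :
    Fin d → ℕ :=
  fun i => x i + ∑ m ∈ Finset.range k, (if inc m ω = i then 1 else 0)

/-- The `ℓ¹` norm of a vertex of `ℤ₊^d`. -/
def nrm {d : ℕ} (x : Fin d → ℕ) : ℕ := ∑ i, x i

/-- Two independent oriented random walks on `ℤ₊^d`: the two increment sequences `inc1`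
and `inc2` are i.i.d. uniform on the standard basis directions `Fin d`, and all the
increments are jointly independent; `ℙ_d` is the probability measure `P`. -/
structure RWModel {Ω : Type} [MeasurableSpace Ω] (P : Measure Ω) (d : ℕ) where
  hprob : IsProbabilityMeasure P
  inc1 : ℕ → Ω → Fin d
  inc2 : ℕ → Ω → Fin d
  h1meas : ∀ n, Measurable (inc1 n)
  h2meas : ∀ n, Measurable (inc2 n)
  h1law : ∀ (n : ℕ) (j : Fin d), P {ω | inc1 n ω = j} = (d : ENNReal)⁻¹
  h2law : ∀ (n : ℕ) (j : Fin d), P {ω | inc2 n ω = j} = (d : ENNReal)⁻¹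
  hIndep : iIndepFun (m := fun _ : ℕ ⊕ ℕ => (inferInstance : MeasurableSpace (Fin d)))
    (Sum.elim inc1 inc2) P

/-- The event `τ_{x,y} < ∞` (for `‖x‖ ≤ ‖y‖`): the walk started at `x` eventually hits the
trajectory of the walk started at `y`, i.e. there is `k ≥ ‖y‖ − ‖x‖` with
`ϑ_k^x = ν_{k−‖y‖+‖x‖}^y`. -/
def meetEvent {Ω : Type} {d : ℕ} (inc1 inc2 : ℕ → Ω → Fin d) (x y : Fin d → ℕ) :
    Set Ω :=
  {ω | ∃ k : ℕ, nrm y - nrm x ≤ k ∧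
    walkRW x inc1 k ω = walkRW y inc2 (k - (nrm y - nrm x)) ω}

/-- The event `τ_{O,O} < ∞`: the two walks started at the origin collide at some time
`n ≥ 1`. -/
def meetOrigin {Ω : Type} {d : ℕ} (inc1 inc2 : ℕ → Ω → Fin d) : Set Ω :=
  {ω | ∃ n : ℕ, 1 ≤ n ∧
    walkRW (fun _ => 0) inc1 n ω = walkRW (fun _ => 0) inc2 n ω}



namespace MeetAux

open Finset
open scoped ENNReal

def cnt {d n : ℕ} (f : Fin n → Fin d) (i : Fin d) : ℕ := ∑ s, if f s = i then 1 else 0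

lemma card_pair_filter_eq {A B V : Type*} [Fintype A] [Fintype B] [DecidableEq V]
    [DecidableEq A] [DecidableEq B]
    (φ : A → V) (ψ : B → V) (T : Finset V) (hφ : ∀ a, φ a ∈ T) :
    (univ.filter fun p : A × B => φ p.1 = ψ p.2).card
      = ∑ v ∈ T, (univ.filter fun a => φ a = v).card * (univ.filter fun b => ψ b = v).card := by
  classical
  rw [Finset.card_eq_sum_card_fiberwise (f := fun p : A × B => φ p.1) (t := T)
    (fun p _ => hφ p.1)]
  refine Finset.sum_congr rfl fun v hv => ?_
  rw [Finset.filter_filter, ← Finset.card_product]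
  congr 1
  ext ⟨a, b⟩
  simp only [Finset.mem_filter, Finset.mem_univ, true_and, Finset.mem_product]
  constructor
  · rintro ⟨h1, h2⟩; exact ⟨h2, by rw [← h1]; exact h2⟩
  · rintro ⟨h1, h2⟩; exact ⟨h1.trans h2.symm, h1⟩

lemma cs_card {A B V : Type*} [Fintype A] [Fintype B] [DecidableEq V]
    [DecidableEq A] [DecidableEq B]
    (φ : A → V) (ψ : B → V) :
    (((univ.filter fun p : A × B => φ p.1 = ψ p.2).card : ℕ) : ℝ) ≤
      Real.sqrt ((univ.filter fun p : A × A => φ p.1 = φ p.2).card) *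
      Real.sqrt ((univ.filter fun p : B × B => ψ p.1 = ψ p.2).card) := by
  classical
  set T := Finset.image φ Finset.univ ∪ Finset.image ψ Finset.univ with hT
  have hφ : ∀ a, φ a ∈ T := fun a => mem_union_left _ (mem_image_of_mem _ (mem_univ a))
  have hψ : ∀ b, ψ b ∈ T := fun b => mem_union_right _ (mem_image_of_mem _ (mem_univ b))
  rw [card_pair_filter_eq φ ψ T hφ, card_pair_filter_eq φ φ T hφ, card_pair_filter_eq ψ ψ T hψ]
  push_cast
  have h := Real.sum_mul_le_sqrt_mul_sqrt T
    (fun v => ((univ.filter fun a => φ a = v).card : ℝ))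
    (fun v => ((univ.filter fun b => ψ b = v).card : ℝ))
  simpa [pow_two] using h



/-- pairs of step sequences whose walks from x resp. y meet at the end. -/
def Emeet (d : ℕ) (x y : Fin d → ℕ) (a b : ℕ) :
    Finset ((Fin a → Fin d) × (Fin b → Fin d)) :=
  univ.filter fun p => (fun i => x i + cnt p.1 i) = (fun i => y i + cnt p.2 i)

/-- pairs of step sequences of equal length with identical direction counts. -/
def Ecol (d n : ℕ) : Finset ((Fin n → Fin d) × (Fin n → Fin d)) :=
  univ.filter fun p => cnt p.1 = cnt p.2

lemma Ecol_zero (d : ℕ) : (Ecol d 0).card = 1 := by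
  rw [Ecol, Finset.filter_true_of_mem, Finset.card_univ]
  · simp
  · intro p _
    funext i
    simp [cnt]

lemma diag_filter_eq (d : ℕ) (x : Fin d → ℕ) (n : ℕ) :
    (univ.filter fun p : (Fin n → Fin d) × (Fin n → Fin d) =>
      (fun i => x i + cnt p.1 i) = (fun i => x i + cnt p.2 i)) = Ecol d n := by
  apply Finset.filter_congr
  intro p _
  simp [funext_iff]

lemma Emeet_card_le (d : ℕ) (x y : Fin d → ℕ) (a b : ℕ) :
    ((Emeet d x y a b).card : ℝ) ≤
      Real.sqrt ((Ecol d a).card) * Real.sqrt ((Ecol d b).card) := by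
  have h := cs_card (fun f : Fin a → Fin d => (fun i => x i + cnt f i))
    (fun g : Fin b → Fin d => (fun i => y i + cnt g i))
  rw [diag_filter_eq, diag_filter_eq] at h
  exact h

lemma Emeet_point_card_le (d : ℕ) (x y : Fin d → ℕ) (a : ℕ) (ha : 1 ≤ a) :
    (Emeet d x y a 0).card ≤ d ^ (a - 1) := by
  obtain ⟨a', rfl⟩ : ∃ a', a = a' + 1 := ⟨a - 1, by omega⟩
  have hinj : Set.InjOn (fun p : (Fin (a'+1) → Fin d) × (Fin 0 → Fin d) =>
      p.1 ∘ Fin.castSucc) (Emeet d x y (a'+1) 0) := by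
    intro p hp p' hp' hres
    have h2 : p.2 = p'.2 := funext fun s => Fin.elim0 s
    simp only [Emeet, Finset.coe_filter, Set.mem_setOf_eq, Finset.mem_univ, true_and,
      funext_iff] at hp hp'
    have hcnt : ∀ i, cnt p.1 i = cnt p'.1 i := by
      intro i
      have h1 := hp i
      have h1' := hp' i
      rw [h2] at h1
      omega
    -- deduce last values equal
    have hlast : p.1 (Fin.last a') = p'.1 (Fin.last a') := by
      by_contra hne
      have hc := hcnt (p.1 (Fin.last a'))
      rw [cnt, cnt, Fin.sum_univ_castSucc, Fin.sum_univ_castSucc] at hc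
      have hsame : ∀ s : Fin a', p.1 (Fin.castSucc s) = p'.1 (Fin.castSucc s) :=
        fun s => congrFun hres s
      simp only [hsame] at hc
      have hc2 := Nat.add_left_cancel hc
      simp [Ne.symm hne] at hc2
    have h1 : p.1 = p'.1 := by
      funext s
      refine Fin.lastCases ?_ ?_ s
      · exact hlast
      · intro s'; exact congrFun hres s'
    exact Prod.ext h1 h2
  have hcard := Finset.card_le_card_of_injOn _ (fun p _ => Finset.mem_univ _) hinj
  calc (Emeet d x y (a'+1) 0).card ≤ (univ : Finset (Fin a' → Fin d)).card := hcard
    _ = d ^ a' := by simp [Finset.card_univ]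
    _ = d ^ (a' + 1 - 1) := by norm_num


/-- collision of counts among the first `s` steps. -/
def colUpto {d n : ℕ} (s : ℕ) (p : (Fin n → Fin d) × (Fin n → Fin d)) : Prop :=
  ∀ i, (∑ s' : Fin n, if s'.1 < s ∧ p.1 s' = i then 1 else 0)
      = ∑ s' : Fin n, if s'.1 < s ∧ p.2 s' = i then 1 else 0

instance {d n : ℕ} (s : ℕ) : DecidablePred (colUpto (d := d) (n := n) s) := by
  intro p; unfold colUpto; infer_instance

open scoped Classical in
/-- first collision at time `t` pattern. -/
def EF (d t : ℕ) : Finset ((Fin t → Fin d) × (Fin t → Fin d)) :=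
  univ.filter fun p => colUpto t p ∧ ∀ s ∈ Finset.Ico 1 t, ¬ colUpto s p

open scoped Classical in
/-- first collision at `t`, collision again after `u` further steps. -/
def ED (d t u : ℕ) : Finset ((Fin (t+u) → Fin d) × (Fin (t+u) → Fin d)) :=
  univ.filter fun p =>
    (p.1 ∘ Fin.castAdd u, p.2 ∘ Fin.castAdd u) ∈ EF d t ∧
    (p.1 ∘ Fin.natAdd t, p.2 ∘ Fin.natAdd t) ∈ Ecol d u

lemma ED_card_le (d t u : ℕ) : (ED d t u).card ≤ (EF d t).card * (Ecol d u).card := by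
  classical
  rw [← Finset.card_product]
  apply Finset.card_le_card_of_injOn
    (fun p => ((p.1 ∘ Fin.castAdd u, p.2 ∘ Fin.castAdd u),
               (p.1 ∘ Fin.natAdd t, p.2 ∘ Fin.natAdd t)))
  · intro p hp
    rw [Finset.mem_coe, ED, Finset.mem_filter] at hp
    exact Finset.mem_coe.2 (Finset.mem_product.2 ⟨hp.2.1, hp.2.2⟩)
  · intro p _ p' _ h
    simp only [Prod.mk.injEq] at h
    obtain ⟨⟨h11, h21⟩, h12, h22⟩ := h
    have e1 : p.1 = p'.1 := by
      funext s
      refine Fin.addCases (fun s' => ?_) (fun s' => ?_) s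
      · exact congrFun h11 s'
      · exact congrFun h12 s'
    have e2 : p.2 = p'.2 := by
      funext s
      refine Fin.addCases (fun s' => ?_) (fun s' => ?_) s
      · exact congrFun h21 s'
      · exact congrFun h22 s'
    exact Prod.ext e1 e2


section Model

variable {Ω : Type} [MeasurableSpace Ω] {P : Measure Ω} {d : ℕ}

def win1 (M : RWModel P d) (n : ℕ) (ω : Ω) : Fin n → Fin d := fun s => M.inc1 s ω
def win2 (M : RWModel P d) (n : ℕ) (ω : Ω) : Fin n → Fin d := fun s => M.inc2 s ω

lemma atom_prob (M : RWModel P d) (hd : 0 < d) {n₁ n₂ : ℕ}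
    (e₁ : Fin n₁ → Fin d) (e₂ : Fin n₂ → Fin d) :
    P {ω | win1 M n₁ ω = e₁ ∧ win2 M n₂ ω = e₂} = ((d : ℝ≥0∞)⁻¹) ^ (n₁ + n₂) := by
  classical
  set c : ℕ ⊕ ℕ → Fin d := Sum.elim
    (fun s => if h : s < n₁ then e₁ ⟨s, h⟩ else ⟨0, hd⟩)
    (fun s => if h : s < n₂ then e₂ ⟨s, h⟩ else ⟨0, hd⟩) with hc
  set S : Finset (ℕ ⊕ ℕ) :=
    ((Finset.range n₁).map ⟨Sum.inl, Sum.inl_injective⟩) ∪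
    ((Finset.range n₂).map ⟨Sum.inr, Sum.inr_injective⟩) with hS
  have hmeas : ∀ i : ℕ ⊕ ℕ, i ∈ S → MeasurableSet ({c i} : Set (Fin d)) :=
    fun i _ => measurableSet_singleton _
  have hins := M.hIndep.measure_inter_preimage_eq_mul S (sets := fun i => {c i}) hmeas
  have hev : {ω | win1 M n₁ ω = e₁ ∧ win2 M n₂ ω = e₂}
      = ⋂ i ∈ S, (Sum.elim M.inc1 M.inc2 i) ⁻¹' {c i} := by
    ext ω
    simp only [Set.mem_setOf_eq, funext_iff, Set.mem_iInter, hS, Finset.mem_union,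
      Finset.mem_map, Finset.mem_range, Function.Embedding.coeFn_mk, Set.mem_preimage,
      Set.mem_singleton_iff, win1, win2]
    constructor
    · rintro ⟨h1, h2⟩ i hi
      rcases hi with ⟨s, hs, rfl⟩ | ⟨s, hs, rfl⟩
      · simpa [c, hs] using h1 ⟨s, hs⟩
      · simpa [c, hs] using h2 ⟨s, hs⟩
    · intro h
      constructor
      · intro s
        have := h (Sum.inl s.1) (Or.inl ⟨s.1, s.2, rfl⟩)
        simpa [c, s.2] using this
      · intro s
        have := h (Sum.inr s.1) (Or.inr ⟨s.1, s.2, rfl⟩)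
        simpa [c, s.2] using this
  rw [hev, hins]
  have hval : ∀ i ∈ S, P (Sum.elim M.inc1 M.inc2 i ⁻¹' {c i}) = (d : ℝ≥0∞)⁻¹ := by
    intro i _
    rcases i with s | s
    · exact M.h1law s (c (Sum.inl s))
    · exact M.h2law s (c (Sum.inr s))
  rw [Finset.prod_congr rfl hval, Finset.prod_const]
  congr 1
  rw [hS, Finset.card_union_of_disjoint, Finset.card_map, Finset.card_map,
    Finset.card_range, Finset.card_range]
  simp [Finset.disjoint_left]

lemma win_meas (M : RWModel P d) {n₁ n₂ : ℕ} (e₁ : Fin n₁ → Fin d) (e₂ : Fin n₂ → Fin d) :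
    MeasurableSet {ω | win1 M n₁ ω = e₁ ∧ win2 M n₂ ω = e₂} := by
  have : {ω | win1 M n₁ ω = e₁ ∧ win2 M n₂ ω = e₂}
      = (⋂ s : Fin n₁, M.inc1 s ⁻¹' {e₁ s}) ∩ ⋂ s : Fin n₂, M.inc2 s ⁻¹' {e₂ s} := by
    ext ω
    simp [win1, win2, funext_iff, Set.mem_iInter]
  rw [this]
  exact (MeasurableSet.iInter fun (s : Fin n₁) =>
      M.h1meas s.1 (measurableSet_singleton (e₁ s))).inter
    (MeasurableSet.iInter fun (s : Fin n₂) => M.h2meas s.1 (measurableSet_singleton (e₂ s)))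

lemma winEvent_meas (M : RWModel P d) {n₁ n₂ : ℕ}
    (E : Finset ((Fin n₁ → Fin d) × (Fin n₂ → Fin d))) :
    MeasurableSet {ω | (win1 M n₁ ω, win2 M n₂ ω) ∈ E} := by
  have : {ω | (win1 M n₁ ω, win2 M n₂ ω) ∈ E}
      = ⋃ e ∈ E, {ω | win1 M n₁ ω = e.1 ∧ win2 M n₂ ω = e.2} := by
    ext ω
    simp [Prod.ext_iff]
  rw [this]
  exact MeasurableSet.biUnion E.countable_toSet fun e _ => win_meas M e.1 e.2

lemma master (M : RWModel P d) (hd : 0 < d) {n₁ n₂ : ℕ}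
    (E : Finset ((Fin n₁ → Fin d) × (Fin n₂ → Fin d))) :
    P {ω | (win1 M n₁ ω, win2 M n₂ ω) ∈ E} = E.card * ((d : ℝ≥0∞)⁻¹) ^ (n₁ + n₂) := by
  classical
  have hev : {ω | (win1 M n₁ ω, win2 M n₂ ω) ∈ E}
      = ⋃ e ∈ E, {ω | win1 M n₁ ω = e.1 ∧ win2 M n₂ ω = e.2} := by
    ext ω
    simp [Prod.ext_iff]
  rw [hev, measure_biUnion_finset ?hd (fun e _ => win_meas M e.1 e.2)]
  · rw [Finset.sum_congr rfl (fun e _ => atom_prob M hd e.1 e.2), Finset.sum_const,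
      nsmul_eq_mul]
  case hd =>
    intro e he e' he' hee
    simp only [Function.onFun]
    apply Set.disjoint_left.2
    rintro ω ⟨h1, h2⟩ ⟨h1', h2'⟩
    exact hee (Prod.ext (h1 ▸ h1'.symm ▸ rfl) (h2 ▸ h2'.symm ▸ rfl))

end Model

section Model2

variable {Ω : Type} [MeasurableSpace Ω] {P : Measure Ω} {d : ℕ}

lemma cnt_win1 (M : RWModel P d) (k : ℕ) (ω : Ω) (i : Fin d) :
    cnt (win1 M k ω) i = ∑ m ∈ Finset.range k, if M.inc1 m ω = i then 1 else 0 :=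
  Fin.sum_univ_eq_sum_range (fun m => if M.inc1 m ω = i then 1 else 0) k

lemma cnt_win2 (M : RWModel P d) (k : ℕ) (ω : Ω) (i : Fin d) :
    cnt (win2 M k ω) i = ∑ m ∈ Finset.range k, if M.inc2 m ω = i then 1 else 0 :=
  Fin.sum_univ_eq_sum_range (fun m => if M.inc2 m ω = i then 1 else 0) k

lemma walk1_eq_cnt (M : RWModel P d) (x : Fin d → ℕ) (k : ℕ) (ω : Ω) :
    walkRW x M.inc1 k ω = fun i => x i + cnt (win1 M k ω) i :=
  funext fun i => by rw [walkRW, cnt_win1]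

lemma walk2_eq_cnt (M : RWModel P d) (y : Fin d → ℕ) (k : ℕ) (ω : Ω) :
    walkRW y M.inc2 k ω = fun i => y i + cnt (win2 M k ω) i :=
  funext fun i => by rw [walkRW, cnt_win2]

lemma walk_event_eq (M : RWModel P d) (x y : Fin d → ℕ) (k k' : ℕ) :
    {ω | walkRW x M.inc1 k ω = walkRW y M.inc2 k' ω}
      = {ω | (win1 M k ω, win2 M k' ω) ∈ Emeet d x y k k'} := by
  ext ω
  simp only [Set.mem_setOf_eq, Emeet, Finset.mem_filter, Finset.mem_univ, true_and]
  rw [walk1_eq_cnt, walk2_eq_cnt]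

lemma Emeet_zero_eq (d j : ℕ) :
    Emeet d (fun _ => 0) (fun _ => 0) j j = Ecol d j := by
  apply Finset.filter_congr
  intro p _
  simp [funext_iff]

/-- the collision event at time `j` for the two walks from the origin. -/
def Acol (M : RWModel P d) (j : ℕ) : Set Ω :=
  {ω | (win1 M j ω, win2 M j ω) ∈ Ecol d j}

lemma Acol_eq (M : RWModel P d) (j : ℕ) :
    {ω | walkRW (fun _ => 0) M.inc1 j ω = walkRW (fun _ => 0) M.inc2 j ω} = Acol M j := by
  rw [walk_event_eq M _ _ j j, Acol, Emeet_zero_eq]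

/-- truncated count equals count of the truncated window. -/
lemma count_trunc (g : ℕ → Fin d) (i : Fin d) {s t : ℕ} (hst : s ≤ t) :
    (∑ s' : Fin t, if s'.1 < s ∧ g s'.1 = i then 1 else 0)
      = ∑ s' : Fin s, if g s'.1 = i then 1 else 0 := by
  rw [Fin.sum_univ_eq_sum_range (fun m => if m < s ∧ g m = i then 1 else 0) t,
    Fin.sum_univ_eq_sum_range (fun m => if g m = i then 1 else 0) s]
  have h1 : ∀ m ∈ Finset.range t, (if m < s ∧ g m = i then 1 else 0)
      = (if m < s then (if g m = i then 1 else 0) else 0) := by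
    intro m _
    by_cases h : m < s <;> by_cases h' : g m = i <;> simp [h, h']
  rw [Finset.sum_congr rfl h1, ← Finset.sum_filter]
  congr 1
  ext m
  simp only [Finset.mem_filter, Finset.mem_range]
  omega

lemma colUpto_iff (M : RWModel P d) (ω : Ω) {s t : ℕ} (hst : s ≤ t) :
    colUpto s (win1 M t ω, win2 M t ω) ↔ ω ∈ Acol M s := by
  unfold colUpto Acol Ecol cnt
  simp only [Set.mem_setOf_eq, Finset.mem_filter, Finset.mem_univ, true_and, funext_iff,
    win1, win2]
  constructor
  · intro h i
    have := h i
    erw [count_trunc (fun m => M.inc1 m ω) i hst, count_trunc (fun m => M.inc2 m ω) i hst]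
      at this
    exact this
  · intro h i
    erw [count_trunc (fun m => M.inc1 m ω) i hst, count_trunc (fun m => M.inc2 m ω) i hst]
    exact h i

/-- first collision at time `t` event. -/
def Fcol (M : RWModel P d) (t : ℕ) : Set Ω :=
  {ω | (win1 M t ω, win2 M t ω) ∈ EF d t}

lemma Fcol_eq (M : RWModel P d) (t : ℕ) :
    Fcol M t = Acol M t \ ⋃ s ∈ Finset.Ico 1 t, Acol M s := by
  ext ω
  have hmem : ω ∈ Fcol M t ↔ colUpto t (win1 M t ω, win2 M t ω) ∧
      ∀ s ∈ Finset.Ico 1 t, ¬ colUpto s (win1 M t ω, win2 M t ω) := by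
    simp [Fcol, EF]
  rw [hmem]
  constructor
  · rintro ⟨h1, h2⟩
    refine ⟨(colUpto_iff M ω le_rfl).1 h1, ?_⟩
    intro hmem2
    rw [Set.mem_iUnion₂] at hmem2
    obtain ⟨s, hs, hmem2⟩ := hmem2
    exact h2 s hs ((colUpto_iff M ω (Finset.mem_Ico.1 hs).2.le).2 hmem2)
  · rintro ⟨h1, h2⟩
    refine ⟨(colUpto_iff M ω le_rfl).2 h1, ?_⟩
    intro s hs hcol
    exact h2 (Set.mem_iUnion₂.2 ⟨s, hs, (colUpto_iff M ω (Finset.mem_Ico.1 hs).2.le).1 hcol⟩)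

end Model2

section Model3

variable {Ω : Type} [MeasurableSpace Ω] {P : Measure Ω} {d : ℕ}

/-- collision probability at time `n`, as a real number. -/
def rr (d n : ℕ) : ℝ := ((Ecol d n).card : ℝ) / (d : ℝ) ^ (n + n)

/-- first collision probability at time `t`, as a real number. -/
def pf (d t : ℕ) : ℝ := ((EF d t).card : ℝ) / (d : ℝ) ^ (t + t)

lemma rr_nonneg (d n : ℕ) : 0 ≤ rr d n := div_nonneg (by positivity) (by positivity)
lemma pf_nonneg (d t : ℕ) : 0 ≤ pf d t := div_nonneg (by positivity) (by positivity)

lemma rr_zero (d : ℕ) : rr d 0 = 1 := by simp [rr, Ecol_zero]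

lemma master_real (M : RWModel P d) (hd : 0 < d) {n₁ n₂ : ℕ}
    (E : Finset ((Fin n₁ → Fin d) × (Fin n₂ → Fin d))) :
    (P {ω | (win1 M n₁ ω, win2 M n₂ ω) ∈ E}).toReal = (E.card : ℝ) / (d : ℝ) ^ (n₁ + n₂) := by
  rw [master M hd E, ENNReal.toReal_mul, ENNReal.toReal_pow, ENNReal.toReal_inv]
  simp [div_eq_mul_inv, inv_pow]

lemma Acol_meas (M : RWModel P d) (j : ℕ) : MeasurableSet (Acol M j) :=
  winEvent_meas M (Ecol d j)

lemma Fcol_meas (M : RWModel P d) (t : ℕ) : MeasurableSet (Fcol M t) :=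
  winEvent_meas M (EF d t)

lemma Acol_prob (M : RWModel P d) (hd : 0 < d) (j : ℕ) :
    (P (Acol M j)).toReal = rr d j :=
  master_real M hd (Ecol d j)

lemma Fcol_prob (M : RWModel P d) (hd : 0 < d) (t : ℕ) :
    (P (Fcol M t)).toReal = pf d t :=
  master_real M hd (EF d t)

lemma Fcol_subset_Acol (M : RWModel P d) (t : ℕ) : Fcol M t ⊆ Acol M t := by
  rw [Fcol_eq]; exact Set.diff_subset

/-- splitting inclusion: first collision at `t` and collision at `t+u`. -/
lemma split_incl (M : RWModel P d) (t u : ℕ) :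
    Fcol M t ∩ Acol M (t + u) ⊆
      {ω | (win1 M (t+u) ω, win2 M (t+u) ω) ∈ ED d t u} := by
  rintro ω ⟨hF, hA⟩
  have hres1 : (win1 M (t+u) ω) ∘ Fin.castAdd u = win1 M t ω := by
    funext s; simp [win1]
  have hres2 : (win2 M (t+u) ω) ∘ Fin.castAdd u = win2 M t ω := by
    funext s; simp [win2]
  have hAt : ω ∈ Acol M t := Fcol_subset_Acol M t hF
  simp only [ED, Set.mem_setOf_eq, Finset.mem_filter, Finset.mem_univ, true_and]
  refine ⟨by rw [hres1, hres2]; exact hF, ?_⟩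
  simp only [Ecol, Finset.mem_filter, Finset.mem_univ, true_and, funext_iff]
  intro i
  have hsplit1 : cnt (win1 M (t+u) ω) i
      = cnt (win1 M t ω) i + cnt ((win1 M (t+u) ω) ∘ Fin.natAdd t) i := by
    rw [← hres1]
    exact Fin.sum_univ_add (fun s => if win1 M (t+u) ω s = i then 1 else 0)
  have hsplit2 : cnt (win2 M (t+u) ω) i
      = cnt (win2 M t ω) i + cnt ((win2 M (t+u) ω) ∘ Fin.natAdd t) i := by
    rw [← hres2]
    exact Fin.sum_univ_add (fun s => if win2 M (t+u) ω s = i then 1 else 0)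
  have hA' : cnt (win1 M (t+u) ω) i = cnt (win2 M (t+u) ω) i := by
    have : cnt (win1 M (t+u) ω) = cnt (win2 M (t+u) ω) := by
      simpa [Acol, Ecol] using hA
    exact congrFun this i
  have hAt' : cnt (win1 M t ω) i = cnt (win2 M t ω) i := by
    have : cnt (win1 M t ω) = cnt (win2 M t ω) := by
      simpa [Acol, Ecol] using hAt
    exact congrFun this i
  omega

lemma split_prob (M : RWModel P d) (hd : 0 < d) (t u : ℕ) :
    (P (Fcol M t ∩ Acol M (t + u))).toReal ≤ pf d t * rr d u := by
  haveI := M.hprob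
  have h1 : (P (Fcol M t ∩ Acol M (t + u))).toReal
      ≤ (P {ω | (win1 M (t+u) ω, win2 M (t+u) ω) ∈ ED d t u}).toReal := by
    apply ENNReal.toReal_mono (measure_ne_top _ _)
    exact measure_mono (split_incl M t u)
  refine h1.trans ?_
  rw [master_real M hd (ED d t u)]
  have h2 : ((ED d t u).card : ℝ) ≤ ((EF d t).card : ℝ) * ((Ecol d u).card : ℝ) := by
    exact_mod_cast ED_card_le d t u
  have h3 : (0:ℝ) < (d:ℝ) ^ ((t+u) + (t+u)) := by positivity
  rw [pf, rr, div_mul_div_comm]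
  have h4 : (d:ℝ) ^ (t + t) * (d:ℝ) ^ (u + u) = (d:ℝ) ^ ((t+u)+(t+u)) := by
    rw [← pow_add]; ring_nf
  rw [h4]
  gcongr

/-- every collision time has a first collision time. -/
lemma Acol_subset_first (M : RWModel P d) (j : ℕ) (hj : 1 ≤ j) :
    Acol M j ⊆ ⋃ t ∈ Finset.Icc 1 j, (Fcol M t ∩ Acol M j) := by
  classical
  intro ω hω
  have hex : ∃ t, 1 ≤ t ∧ ω ∈ Acol M t := ⟨j, hj, hω⟩
  set t₀ := Nat.find hex with ht₀
  obtain ⟨h1, h2⟩ := Nat.find_spec hex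
  have hle : t₀ ≤ j := Nat.find_min' hex ⟨hj, hω⟩
  refine Set.mem_biUnion (Finset.mem_Icc.2 ⟨h1, hle⟩) ⟨?_, hω⟩
  rw [Fcol_eq]
  refine ⟨h2, ?_⟩
  intro hmem
  rw [Set.mem_iUnion₂] at hmem
  obtain ⟨s, hs, hmem⟩ := hmem
  rw [Finset.mem_Ico] at hs
  exact Nat.find_min hex hs.2 ⟨hs.1, hmem⟩

end Model3

section Model4

variable {Ω : Type} [MeasurableSpace Ω] {P : Measure Ω} {d : ℕ}

lemma collision_recursion (M : RWModel P d) (hd : 0 < d) (j : ℕ) (hj : 1 ≤ j) :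
    rr d j ≤ ∑ t ∈ Finset.Icc 1 j, pf d t * rr d (j - t) := by
  haveI := M.hprob
  rw [← Acol_prob M hd j]
  have h1 : P (Acol M j) ≤ ∑ t ∈ Finset.Icc 1 j, P (Fcol M t ∩ Acol M j) :=
    (measure_mono (Acol_subset_first M j hj)).trans (measure_biUnion_finset_le _ _)
  have h2 : (P (Acol M j)).toReal
      ≤ ∑ t ∈ Finset.Icc 1 j, (P (Fcol M t ∩ Acol M j)).toReal := by
    rw [← ENNReal.toReal_sum (fun t _ => measure_ne_top _ _)]
    exact ENNReal.toReal_mono (ENNReal.sum_ne_top.2 fun t _ => measure_ne_top _ _) h1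
  refine h2.trans (Finset.sum_le_sum ?_)
  intro t ht
  rw [Finset.mem_Icc] at ht
  have hju : j = t + (j - t) := by omega
  have := split_prob M hd t (j - t)
  rw [← hju] at this
  exact this

lemma Fcol_pairwise_disjoint (M : RWModel P d) :
    ∀ t t' : ℕ, 1 ≤ t → 1 ≤ t' → t ≠ t' → Disjoint (Fcol M t) (Fcol M t') := by
  have key : ∀ t t' : ℕ, 1 ≤ t → t < t' → Disjoint (Fcol M t) (Fcol M t') := by
    intro t t' ht htt
    rw [Set.disjoint_left]
    intro ω hω hω'
    have h1 : ω ∈ Acol M t := Fcol_subset_Acol M t hω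
    rw [Fcol_eq] at hω'
    exact hω'.2 (Set.mem_iUnion₂.2 ⟨t, Finset.mem_Ico.2 ⟨ht, htt⟩, h1⟩)
  intro t t' ht ht' htt
  rcases Nat.lt_or_ge t t' with h | h
  · exact key t t' ht h
  · have h' : t' < t := by omega
    exact (key t' t ht' h').symm

lemma meetOrigin_eq_iUnion (M : RWModel P d) :
    meetOrigin M.inc1 M.inc2 = ⋃ n ∈ {n : ℕ | 1 ≤ n}, Acol M n := by
  ext ω
  simp only [meetOrigin, Set.mem_setOf_eq, Set.mem_iUnion, exists_prop]
  constructor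
  · rintro ⟨n, hn, h⟩
    exact ⟨n, hn, (Acol_eq M n) ▸ h⟩
  · rintro ⟨n, hn, h⟩
    exact ⟨n, hn, by rw [← Acol_eq M n] at h; exact h⟩

lemma pf_sum_le (M : RWModel P d) (hd : 0 < d) (K : ℕ) :
    ∑ t ∈ Finset.Icc 1 K, pf d t ≤ (P (meetOrigin M.inc1 M.inc2)).toReal := by
  haveI := M.hprob
  have heq : ∑ t ∈ Finset.Icc 1 K, pf d t
      = (P (⋃ t ∈ Finset.Icc 1 K, Fcol M t)).toReal := by
    rw [measure_biUnion_finset ?disj (fun t _ => Fcol_meas M t),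
      ENNReal.toReal_sum (fun t _ => measure_ne_top _ _)]
    · exact Finset.sum_congr rfl fun t ht => (Fcol_prob M hd t).symm
    case disj =>
      intro t ht t' ht' htt
      simp only [Finset.coe_Icc, Set.mem_Icc] at ht ht'
      exact Fcol_pairwise_disjoint M t t' ht.1 ht'.1 htt
  rw [heq]
  apply ENNReal.toReal_mono (measure_ne_top _ _)
  apply measure_mono
  intro ω hω
  rw [Set.mem_iUnion₂] at hω
  obtain ⟨t, ht, hω⟩ := hω
  rw [Finset.mem_Icc] at ht
  rw [meetOrigin_eq_iUnion M]
  exact Set.mem_biUnion ht.1 (Fcol_subset_Acol M t hω)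

lemma GK_le (M : RWModel P d) (hd : 0 < d) (hd4 : (4:ℝ) ≤ (d:ℝ))
    (hp : (P (meetOrigin M.inc1 M.inc2)).toReal ≤ 2 / d) (K : ℕ) :
    ∑ j ∈ Finset.Icc 1 K, rr d j ≤ 4 / d := by
  haveI := M.hprob
  set G := ∑ j ∈ Finset.Icc 1 K, rr d j with hG
  have hGnn : 0 ≤ G := Finset.sum_nonneg fun j _ => rr_nonneg d j
  have hdpos : (0:ℝ) < d := by positivity
  have key : G ≤ (2 / d) * (1 + G) := by
    have step1 : G ≤ ∑ j ∈ Finset.Icc 1 K, ∑ t ∈ Finset.Icc 1 j, pf d t * rr d (j - t) :=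
      Finset.sum_le_sum fun j hj =>
        collision_recursion M hd j (Finset.mem_Icc.1 hj).1
    have step2 : ∑ j ∈ Finset.Icc 1 K, ∑ t ∈ Finset.Icc 1 j, pf d t * rr d (j - t)
        = ∑ t ∈ Finset.Icc 1 K, ∑ j ∈ Finset.Icc t K, pf d t * rr d (j - t) := by
      apply Finset.sum_comm'
      intro j t
      simp only [Finset.mem_Icc]
      omega
    have step3 : ∀ t ∈ Finset.Icc 1 K,
        ∑ j ∈ Finset.Icc t K, pf d t * rr d (j - t) ≤ pf d t * (1 + G) := by
      intro t ht
      rw [Finset.mem_Icc] at ht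
      rw [← Finset.mul_sum]
      apply mul_le_mul_of_nonneg_left ?_ (pf_nonneg d t)
      have hre : ∑ j ∈ Finset.Icc t K, rr d (j - t)
          = ∑ u ∈ Finset.Icc 0 (K - t), rr d u := by
        have hmap : (Finset.Icc 0 (K - t)).map (addLeftEmbedding t) = Finset.Icc t K := by
          rw [Finset.map_add_left_Icc, Nat.add_zero]
          congr 1
          omega
        rw [← hmap, Finset.sum_map]
        apply Finset.sum_congr rfl
        intro u _
        simp [addLeftEmbedding]
      rw [hre]
      have hins : Finset.Icc 0 (K - t) = insert 0 (Finset.Icc 1 (K - t)) := by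
        ext u; simp; omega
      rw [hins, Finset.sum_insert (by simp), rr_zero]
      apply add_le_add le_rfl
      apply Finset.sum_le_sum_of_subset_of_nonneg
      · apply Finset.Icc_subset_Icc_right; omega
      · intro u _ _; exact rr_nonneg d u
    calc G ≤ ∑ t ∈ Finset.Icc 1 K, ∑ j ∈ Finset.Icc t K, pf d t * rr d (j - t) :=
          step1.trans (le_of_eq step2)
      _ ≤ ∑ t ∈ Finset.Icc 1 K, pf d t * (1 + G) := Finset.sum_le_sum step3
      _ = (∑ t ∈ Finset.Icc 1 K, pf d t) * (1 + G) := by rw [Finset.sum_mul]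
      _ ≤ (2 / d) * (1 + G) := by
          apply mul_le_mul_of_nonneg_right ((pf_sum_le M hd K).trans hp)
          linarith
  have h2d : (2:ℝ)/d ≤ 1/2 := by
    rw [div_le_div_iff₀ hdpos (by norm_num)]
    linarith
  have hmul : (2/(d:ℝ)) * G ≤ (1/2) * G := mul_le_mul_of_nonneg_right h2d hGnn
  have hexp : (2/(d:ℝ)) * (1 + G) = 2/d + (2/d) * G := by ring
  rw [hexp] at key
  have h4 : (4:ℝ)/d = 2*(2/d) := by ring
  rw [hG] at key hmul ⊢
  rw [h4]
  linarith

end Model4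

section Model5

variable {Ω : Type} [MeasurableSpace Ω] {P : Measure Ω} {d : ℕ}

lemma walk_zero (x : Fin d → ℕ) (inc : ℕ → Ω → Fin d) (ω : Ω) :
    walkRW x inc 0 ω = x := by
  funext i; simp [walkRW]

lemma sqrt_amgm_div (c Na Nb da db : ℝ) (hda : 0 < da) (hdb : 0 < db)
    (hNa : 0 ≤ Na) (hNb : 0 ≤ Nb)
    (hc : c ≤ Real.sqrt Na * Real.sqrt Nb) :
    c / (da * db) ≤ (Na / (da * da) + Nb / (db * db)) / 2 := by
  have h1 : c / (da * db) ≤ (Real.sqrt Na / da) * (Real.sqrt Nb / db) := by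
    rw [div_mul_div_comm]
    gcongr
  have h3 : (Real.sqrt Na / da) ^ 2 = Na / (da * da) := by
    rw [div_pow, Real.sq_sqrt hNa, pow_two]
  have h4 : (Real.sqrt Nb / db) ^ 2 = Nb / (db * db) := by
    rw [div_pow, Real.sq_sqrt hNb, pow_two]
  nlinarith [sq_nonneg (Real.sqrt Na / da - Real.sqrt Nb / db)]

lemma sum_rr_tail_le (M : RWModel P d) (hd : 0 < d) (hd4 : (4:ℝ) ≤ (d:ℝ))
    (hp : (P (meetOrigin M.inc1 M.inc2)).toReal ≤ 2 / d) (a n : ℕ) :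
    ∑ i ∈ Finset.range n, rr d (a + 1 + i) ≤ 4 / d := by
  have hinj : Set.InjOn (fun i => a + 1 + i) (Finset.range n) := by
    intro i _ j _ h
    simp only at h
    omega
  rw [← Finset.sum_image hinj]
  have hsub : (Finset.range n).image (fun i => a + 1 + i) ⊆ Finset.Icc 1 (a + n) := by
    intro j hj
    simp only [Finset.mem_image, Finset.mem_range] at hj
    obtain ⟨i, hi, rfl⟩ := hj
    rw [Finset.mem_Icc]
    omega
  calc ∑ j ∈ (Finset.range n).image (fun i => a + 1 + i), rr d j
      ≤ ∑ j ∈ Finset.Icc 1 (a + n), rr d j :=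
        Finset.sum_le_sum_of_subset_of_nonneg hsub (fun j _ _ => rr_nonneg d j)
    _ ≤ 4 / d := GK_le M hd hd4 hp (a + n)

lemma main_bound (M : RWModel P d) (hd4 : 4 ≤ d)
    (hp : (P (meetOrigin M.inc1 M.inc2)).toReal ≤ 2 / d)
    (x y : Fin d → ℕ) (hxy : x ≠ y) (hnm : nrm x ≤ nrm y) :
    (P (meetEvent M.inc1 M.inc2 x y)).toReal ≤ 5 / d := by
  haveI := M.hprob
  have hd : 0 < d := by omega
  have hdr : (4:ℝ) ≤ (d:ℝ) := by exact_mod_cast hd4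
  have hdpos : (0:ℝ) < (d:ℝ) := by positivity
  set m := nrm y - nrm x with hm
  set Mx := max m 1 with hMx
  set C : ℕ → Set Ω := fun k =>
    {ω | walkRW x M.inc1 k ω = walkRW y M.inc2 (k - m) ω} with hC
  -- exact probability of C k
  have hCk : ∀ k, (P (C k)).toReal
      = ((Emeet d x y k (k - m)).card : ℝ) / (d:ℝ) ^ (k + (k - m)) := by
    intro k
    rw [hC]
    simp only
    rw [walk_event_eq M x y k (k - m)]
    exact master_real M hd _
  -- Cauchy-Schwarz bound for k > m
  have hCS : ∀ k, m < k → (P (C k)).toReal ≤ (rr d k + rr d (k - m)) / 2 := by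
    intro k hk
    rw [hCk k]
    have hcard := Emeet_card_le d x y k (k - m)
    have hpow : (d:ℝ) ^ (k + (k - m)) = (d:ℝ)^k * (d:ℝ)^(k-m) := pow_add _ _ _
    rw [hpow]
    have h1 : rr d k = ((Ecol d k).card : ℝ) / ((d:ℝ)^k * (d:ℝ)^k) := by
      rw [rr, ← pow_add]
    have h2 : rr d (k - m) = ((Ecol d (k-m)).card : ℝ) / ((d:ℝ)^(k-m) * (d:ℝ)^(k-m)) := by
      rw [rr, ← pow_add]
    rw [h1, h2]
    exact sqrt_amgm_div _ _ _ _ _ (by positivity) (by positivity)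
      (by positivity) (by positivity) hcard
  -- bound for the k = m term (when 1 ≤ m)
  have hM0 : 1 ≤ m → (P (C m)).toReal ≤ 1 / d := by
    intro hm1
    rw [hCk m]
    have : m - m = 0 := by omega
    rw [this]
    have hcard := Emeet_point_card_le d x y m hm1
    have hcard' : ((Emeet d x y m 0).card : ℝ) ≤ (d:ℝ) ^ (m - 1) := by
      exact_mod_cast hcard
    rw [Nat.add_zero]
    rw [div_le_div_iff₀ (by positivity) hdpos]
    calc ((Emeet d x y m 0).card : ℝ) * (d:ℝ)
        ≤ (d:ℝ)^(m-1) * (d:ℝ) := by gcongr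
      _ = (d:ℝ)^m := by
          rw [← pow_succ]
          congr 1
          omega
      _ = 1 * (d:ℝ)^m := (one_mul _).symm
  -- partial sums
  have hpartial : ∀ n, ∑ i ∈ Finset.range n, (P (C (Mx + i))).toReal ≤ 5 / d := by
    intro n
    rcases Nat.eq_zero_or_pos m with hm0 | hm1
    · -- m = 0, Mx = 1
      have hMx1 : Mx = 1 := by rw [hMx, hm0]; simp
      have hbound : ∀ i ∈ Finset.range n, (P (C (Mx + i))).toReal ≤ rr d (1 + i) := by
        intro i _
        have h := hCS (Mx + i) (by omega)
        have he : Mx + i - m = Mx + i := by omega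
        rw [he, hMx1] at h
        calc (P (C (Mx + i))).toReal ≤ (rr d (1 + i) + rr d (1 + i)) / 2 := by
              rw [hMx1]; exact h
          _ = rr d (1 + i) := by ring
      calc ∑ i ∈ Finset.range n, (P (C (Mx + i))).toReal
          ≤ ∑ i ∈ Finset.range n, rr d (1 + i) := Finset.sum_le_sum hbound
        _ = ∑ i ∈ Finset.range n, rr d (0 + 1 + i) := by norm_num
        _ ≤ 4 / d := sum_rr_tail_le M hd hdr hp 0 n
        _ ≤ 5 / d := by gcongr <;> norm_num
    · -- 1 ≤ m, Mx = m
      have hMxm : Mx = m := by omega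
      cases n with
      | zero => simp; positivity
      | succ n' =>
        rw [Finset.sum_range_succ']
        have hfirst : (P (C (Mx + 0))).toReal ≤ 1 / d := by
          rw [Nat.add_zero, hMxm]; exact hM0 hm1
        have hrest : ∑ i ∈ Finset.range n', (P (C (Mx + (i + 1)))).toReal
            ≤ (4 / d + 4 / d) / 2 := by
          have hbound : ∀ i ∈ Finset.range n', (P (C (Mx + (i + 1)))).toReal
              ≤ (rr d (m + 1 + i) + rr d (0 + 1 + i)) / 2 := by
            intro i _
            have h := hCS (Mx + (i + 1)) (by omega)
            have he1 : Mx + (i + 1) = m + 1 + i := by omega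
            have he2 : m + 1 + i - m = 0 + 1 + i := by omega
            rw [he1, he2] at h
            rwa [he1]
          calc ∑ i ∈ Finset.range n', (P (C (Mx + (i + 1)))).toReal
              ≤ ∑ i ∈ Finset.range n', (rr d (m + 1 + i) + rr d (0 + 1 + i)) / 2 :=
                Finset.sum_le_sum hbound
            _ = (∑ i ∈ Finset.range n', rr d (m + 1 + i)
                  + ∑ i ∈ Finset.range n', rr d (0 + 1 + i)) / 2 := by
                rw [← Finset.sum_add_distrib, Finset.sum_div]
            _ ≤ (4 / d + 4 / d) / 2 := by
                have t1 := sum_rr_tail_le M hd hdr hp m n'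
                have t2 := sum_rr_tail_le M hd hdr hp 0 n'
                have hnn1 : ∑ i ∈ Finset.range n', rr d (m + 1 + i) ≥ 0 :=
                  Finset.sum_nonneg fun i _ => rr_nonneg d _
                linarith
        have : (4 / (d:ℝ) + 4 / d) / 2 = 4 / d := by ring
        rw [this] at hrest
        calc ∑ i ∈ Finset.range n', (P (C (Mx + (i + 1)))).toReal
              + (P (C (Mx + 0))).toReal ≤ 4 / d + 1 / d := add_le_add hrest hfirst
          _ = 5 / d := by ring
  -- union bound
  have hsub : meetEvent M.inc1 M.inc2 x y ⊆ ⋃ i : ℕ, C (Mx + i) := by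
    intro ω hω
    obtain ⟨k, hk, heq⟩ := hω
    have hk1 : 1 ≤ k := by
      by_contra hcon
      push_neg at hcon
      have hk0 : k = 0 := by omega
      have hz : (0:ℕ) - (nrm y - nrm x) = 0 := by omega
      rw [hk0, hz, walk_zero, walk_zero] at heq
      exact hxy heq
    have hkM : Mx ≤ k := by omega
    have hk2 : Mx + (k - Mx) = k := by omega
    refine Set.mem_iUnion.2 ⟨k - Mx, ?_⟩
    show ω ∈ C (Mx + (k - Mx))
    rw [hk2]
    exact heq
  have hA : P (meetEvent M.inc1 M.inc2 x y) ≤ ENNReal.ofReal (5 / d) := by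
    calc P (meetEvent M.inc1 M.inc2 x y) ≤ P (⋃ i : ℕ, C (Mx + i)) := measure_mono hsub
      _ ≤ ∑' i : ℕ, P (C (Mx + i)) := measure_iUnion_le _
      _ ≤ ENNReal.ofReal (5 / d) := by
          rw [ENNReal.tsum_eq_iSup_sum]
          apply iSup_le
          intro F
          obtain ⟨n, hFn⟩ := F.exists_nat_subset_range
          calc ∑ i ∈ F, P (C (Mx + i)) ≤ ∑ i ∈ Finset.range n, P (C (Mx + i)) :=
                Finset.sum_le_sum_of_subset hFn
            _ = ENNReal.ofReal (∑ i ∈ Finset.range n, (P (C (Mx + i))).toReal) := by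
                rw [ENNReal.ofReal_sum_of_nonneg (fun i _ => ENNReal.toReal_nonneg)]
                exact Finset.sum_congr rfl fun i _ =>
                  (ENNReal.ofReal_toReal (measure_ne_top _ _)).symm
            _ ≤ ENNReal.ofReal (5 / d) := ENNReal.ofReal_le_ofReal (hpartial n)
  exact ENNReal.toReal_le_of_le_ofReal (by positivity) hA

end Model5

end MeetAux



/-- Assume there is a constant `c₃ > 0` such that
`ℙ_d(τ_{O,O} < ∞) ≤ 1/d + c₃/d²` for every `d ≥ 4`.  Then there exists a constant
`c₁ > 0`, not depending on `d`, such that for every `d ≥ 4` and all `x, y ∈ ℤ₊^d` with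
`x ≠ y` and `‖x‖ ≤ ‖y‖`, `ℙ_d(τ_{x,y} < ∞) ≤ c₁/√d`. -/
theorem meet_prob_le_inv_sqrt (Ω : ℕ → Type) (mΩ : ∀ d, MeasurableSpace (Ω d))
    (P : ∀ d, @Measure (Ω d) (mΩ d))
    (RW : ∀ d, RWModel (P d) d)
    (c₃ : ℝ) (hc₃ : 0 < c₃)
    (hyp : ∀ d : ℕ, 4 ≤ d →
      ((P d) (meetOrigin (RW d).inc1 (RW d).inc2)).toReal ≤ 1 / d + c₃ / (d : ℝ) ^ 2) :
    ∃ c₁ : ℝ, 0 < c₁ ∧ ∀ d : ℕ, 4 ≤ d → ∀ x y : Fin d → ℕ, x ≠ y → nrm x ≤ nrm y →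
      ((P d) (meetEvent (RW d).inc1 (RW d).inc2 x y)).toReal ≤ c₁ / Real.sqrt d := by
  classical
  set d₀ : ℕ := max 4 (Nat.ceil c₃) with hd₀
  have hd₀4 : 4 ≤ d₀ := le_max_left _ _
  refine ⟨Real.sqrt d₀ + 5, by positivity, ?_⟩
  intro d hd4 x y hxy hnm
  haveI := (RW d).hprob
  have hdpos : (0:ℝ) < (d:ℝ) := by
    have : 0 < d := by omega
    exact_mod_cast this
  have hsq : (0:ℝ) < Real.sqrt d := Real.sqrt_pos.2 hdpos
  have hsq0 : (0:ℝ) ≤ Real.sqrt d₀ := Real.sqrt_nonneg _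
  rcases lt_or_ge d d₀ with hsmall | hbig
  · -- small d : trivial bound 1
    have h1 : ((P d) (meetEvent (RW d).inc1 (RW d).inc2 x y)).toReal ≤ 1 := by
      have h := ENNReal.toReal_mono (measure_ne_top (P d) Set.univ)
        (measure_mono (Set.subset_univ (meetEvent (RW d).inc1 (RW d).inc2 x y)))
      simpa [measure_univ] using h
    have h2 : Real.sqrt d ≤ Real.sqrt d₀ := Real.sqrt_le_sqrt (by exact_mod_cast hsmall.le)
    calc ((P d) (meetEvent (RW d).inc1 (RW d).inc2 x y)).toReal ≤ 1 := h1
      _ ≤ Real.sqrt d₀ / Real.sqrt d := by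
          rw [le_div_iff₀ hsq]
          simpa using h2
      _ ≤ (Real.sqrt d₀ + 5) / Real.sqrt d := by gcongr <;> norm_num
  · -- large d : main estimate
    have hcd : c₃ ≤ (d:ℝ) := by
      refine (Nat.le_ceil c₃).trans ?_
      have : (Nat.ceil c₃ : ℕ) ≤ d := le_trans (le_max_right 4 _) hbig
      exact_mod_cast this
    have hple : ((P d) (meetOrigin (RW d).inc1 (RW d).inc2)).toReal ≤ 2 / d := by
      have h := hyp d hd4
      have hth : c₃ / (d:ℝ)^2 ≤ 1 / d := by
        rw [div_le_div_iff₀ (by positivity) hdpos]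
        calc c₃ * (d:ℝ) ≤ (d:ℝ) * (d:ℝ) := mul_le_mul_of_nonneg_right hcd hdpos.le
          _ = 1 * (d:ℝ)^2 := by ring
      have : (1:ℝ)/d + c₃/(d:ℝ)^2 ≤ 2/d := by
        have he : (2:ℝ)/d = 1/d + 1/d := by ring
        rw [he]
        linarith
      linarith
    have hmain := MeetAux.main_bound (RW d) hd4 hple x y hxy hnm
    have hsqd : Real.sqrt d ≤ (d:ℝ) := by
      have h1 : Real.sqrt d ^ 2 = (d:ℝ) := Real.sq_sqrt hdpos.le
      have h2 : (4:ℝ) ≤ (d:ℝ) := by exact_mod_cast hd4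
      nlinarith [h1, h2, Real.sqrt_nonneg (d:ℝ), sq_nonneg (Real.sqrt d - 1)]
    calc ((P d) (meetEvent (RW d).inc1 (RW d).inc2 x y)).toReal ≤ 5 / (d:ℝ) := hmain
      _ ≤ 5 / Real.sqrt d := by
          gcongr
      _ ≤ (Real.sqrt d₀ + 5) / Real.sqrt d := by
          gcongr
          linarith
end
end
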